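/- arXiv:2305.15784 — 2 statements merged into one kernel-verified Lean document; each statement's English description precedes it below -/
import Mathlib

section
/- Let N = 2·3^m with m ≥ 2. The number of elements k ∈ Z/NZ for which the k-monomial minimal solution of (E_N) is irreducible equals 4·3^{m−1} + 3. -/
open Matrix

/-- The elementary matrix `[[a, -1], [1, 0]]` over `ZMod N`. -/
def genMat {N : ℕ} (a : ZMod N) : Matrix (Fin 2) (Fin 2) (ZMod N) :=
  !![a, -1; 1, 0]

/-- `Mword [a₁, …, aₙ]` is the matrix `Mₙ(a₁, …, aₙ) = genMat aₙ * ⋯ * genMat a₁`. -/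
def Mword {N : ℕ} (l : List (ZMod N)) : Matrix (Fin 2) (Fin 2) (ZMod N) :=
  (l.reverse.map genMat).prod

/-- A tuple (encoded as a list) is a solution of `(E_N)` if its matrix is `±Id`. -/
def IsSolutionE {N : ℕ} (l : List (ZMod N)) : Prop :=
  Mword l = 1 ∨ Mword l = -1

/-- The size of the `k`-monomial minimal solution of `(E_N)`: the least positive `n`
such that the constant `n`-tuple `(k, …, k)` is a solution of `(E_N)`. -/
noncomputable def monomialSize (N : ℕ) (k : ZMod N) : ℕ :=
  sInf {n : ℕ | 0 < n ∧ IsSolutionE (List.replicate n k)}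

/-- The `k`-monomial minimal solution of `(E_N)`. -/
noncomputable def monoSol (N : ℕ) (k : ZMod N) : List (ZMod N) :=
  List.replicate (monomialSize N k) k

/-- The sum `⊕` of two tuples:
`(a₁,…,aₘ) ⊕ (b₁,…,bₗ) = (a₁+bₗ, a₂, …, aₘ₋₁, aₘ+b₁, b₂, …, bₗ₋₁)`. -/
def oplus {N : ℕ} (a b : List (ZMod N)) : List (ZMod N) :=
  (a.headD 0 + b.getLastD 0) ::
    ((a.drop 1).dropLast ++ (a.getLastD 0 + b.headD 0) :: (b.drop 1).dropLast)

/-- Two tuples are equivalent (`∼`) if one is obtained from the other by a cyclic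
permutation, possibly composed with order reversal. -/
def TupEquiv {N : ℕ} (c d : List (ZMod N)) : Prop :=
  (∃ i, d = c.rotate i) ∨ (∃ i, d = c.reverse.rotate i)

/-- A tuple is reducible if it is equivalent to a sum `a ⊕ b` where `b` is a solution of
`(E_N)` and both `a`, `b` have length at least `3`. -/
def IsReducibleE {N : ℕ} (c : List (ZMod N)) : Prop :=
  ∃ a b : List (ZMod N), 3 ≤ a.length ∧ 3 ≤ b.length ∧ IsSolutionE b ∧
    TupEquiv c (oplus a b)

/-- An irreducible solution of `(E_N)`: a solution of size at least `3` that is not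
reducible (the solution `(0,0)` is not considered irreducible). -/
def IsIrreducibleE {N : ℕ} (c : List (ZMod N)) : Prop :=
  IsSolutionE c ∧ 3 ≤ c.length ∧ ¬ IsReducibleE c

/-- A reducible solution of `(E_N)`: a solution that is not irreducible. -/
def IsReducibleSol {N : ℕ} (c : List (ZMod N)) : Prop :=
  IsSolutionE c ∧ ¬ IsIrreducibleE c

/-- `N` is monomially irreducible if for every nonzero `k ∈ ZMod N` the `k`-monomial
minimal solution of `(E_N)` is irreducible. -/
def MonomiallyIrreducible (N : ℕ) : Prop :=
  ∀ k : ZMod N, k ≠ 0 → IsIrreducibleE (monoSol N k)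

/-- `N` is quasi monomially irreducible if for every integer `k` coprime to `N` the
`(k mod N)`-monomial minimal solution of `(E_N)` is irreducible. -/
def QuasiMonomiallyIrreducible (N : ℕ) : Prop :=
  ∀ k : ℤ, Int.gcd k (N : ℤ) = 1 → IsIrreducibleE (monoSol N (k : ZMod N))

/-- `N` is semi monomially irreducible: if `N` is even but not divisible by `4`, this
requires that for every integer `a` coprime to `N/2` the `(2a mod N)`-monomial minimal
solution of `(E_N)` is irreducible; otherwise (i.e. `N` odd or divisible by `4`), it
requires the same for every integer `a` coprime to `N`. -/
def SemiMonomiallyIrreducible (N : ℕ) : Prop :=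
  if 2 ∣ N ∧ ¬ (4 ∣ N) then
    ∀ a : ℤ, Int.gcd a ((N / 2 : ℕ) : ℤ) = 1 →
      IsIrreducibleE (monoSol N ((2 * a : ℤ) : ZMod N))
  else
    ∀ a : ℤ, Int.gcd a (N : ℤ) = 1 →
      IsIrreducibleE (monoSol N ((2 * a : ℤ) : ZMod N))

/-- the Chebyshev-like sequence: entries of powers of `genMat k`. -/
def cheb {R : Type*} [CommRing R] (k : R) : ℕ → R
  | 0 => 0
  | 1 => 1
  | (n+2) => k * cheb k (n+1) - cheb k n

section chebring
variable {R S : Type*} [CommRing R] [CommRing S] (k : R)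

@[simp] lemma cheb_zero : cheb k 0 = 0 := rfl
@[simp] lemma cheb_one : cheb k 1 = 1 := rfl
lemma cheb_add_two (n : ℕ) : cheb k (n+2) = k * cheb k (n+1) - cheb k n := rfl
@[simp] lemma cheb_two : cheb k 2 = k := by
  show k * cheb k 1 - cheb k 0 = k; simp

lemma cheb_map (f : R →+* S) (n : ℕ) : cheb (f k) n = f (cheb k n) := by
  induction n using Nat.twoStepInduction with
  | zero => simp
  | one => simp
  | more n ih1 ih2 => simp [cheb_add_two, ih1, ih2]

/-- addition formula -/
lemma cheb_addf : ∀ p q : ℕ, cheb k (p + q + 1) =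
    cheb k (p+1) * cheb k (q+1) - cheb k p * cheb k q := by
  intro p
  induction p using Nat.twoStepInduction with
  | zero => intro q; simp
  | one =>
    intro q
    rw [show 1 + q + 1 = q + 2 by ring, cheb_add_two]
    simp
  | more p ih1 ih2 =>
    intro q
    have e1 : p + 2 + q + 1 = (p + q + 1) + 2 := by ring
    have e2 : p + 1 + q + 1 = (p + q + 1) + 1 := by ring
    rw [e1, cheb_add_two]
    rw [show p + q + 1 + 1 = p + 1 + q + 1 by ring, ih2 q]
    rw [show p + q + 1 = p + q + 1 by rfl, ih1 q]
    rw [cheb_add_two k (p+1), cheb_add_two k p]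
    ring

/-- determinant identity -/
lemma cheb_det (n : ℕ) : cheb k (n+1) * cheb k (n+1) - cheb k (n+2) * cheb k n = 1 := by
  induction n with
  | zero => simp
  | succ n ih =>
    rw [cheb_add_two k (n+1)]
    have hr := cheb_add_two k n
    linear_combination ih + cheb k (n+2) * hr

/-- tripling formula -/
lemma cheb_trip (j : ℕ) : cheb k (3 * (j+1)) =
    cheb k (j+1) * (3 * cheb k (j+2)^2 - 3 * k * cheb k (j+1) * cheb k (j+2)
      + (k^2 - 1) * cheb k (j+1)^2) := by
  have h1 := cheb_addf k (2*j+2) j          -- cheb (3j+3)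
  have h2 := cheb_addf k (j+1) j            -- cheb (2j+2)
  have h3 := cheb_addf k (j+1) (j+1)        -- cheb (2j+3)
  have h4 := cheb_addf k j j                -- cheb (2j+1)
  have e1 : 2*j + 2 + j + 1 = 3 * (j+1) := by ring
  have e2 : j + 1 + j + 1 = 2*j + 2 := by ring
  have e3 : j + 1 + (j+1) + 1 = 2*j + 2 + 1 := by ring
  rw [e1] at h1
  rw [e2] at h2
  rw [e3] at h3
  have hrec : cheb k (j+2) = k * cheb k (j+1) - cheb k j := cheb_add_two k j
  -- substitute
  rw [h1, h3, h2]
  have hj : cheb k j = k * cheb k (j+1) - cheb k (j+2) := by rw [hrec]; ring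
  rw [show (2*j+2+1) = 2*j + 1 + 1 + 1 by ring] at *
  rw [h4] at *
  rw [hj]
  ring
end chebring

section zmodN
variable {N : ℕ}

lemma neg_one_fin_two : (-1 : Matrix (Fin 2) (Fin 2) (ZMod N)) = !![-1, 0; 0, -1] := by
  rw [show (-1 : Matrix (Fin 2) (Fin 2) (ZMod N)) = -(1 : Matrix (Fin 2) (Fin 2) (ZMod N)) by rfl,
    Matrix.one_fin_two]
  ext i j
  fin_cases i <;> fin_cases j <;> simp

lemma genMat_pow (k : ZMod N) : ∀ n : ℕ,
    genMat k ^ (n+1) = !![cheb k (n+2), -cheb k (n+1); cheb k (n+1), -cheb k n]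
  | 0 => by
    simp [genMat, pow_one]
  | (n+1) => by
    rw [pow_succ, genMat_pow k n, genMat, Matrix.mul_fin_two]
    ext i j
    fin_cases i <;> fin_cases j <;>
      simp [show (2:ℕ)+n = n+2 from by ring, show (1:ℕ)+n = n+1 from by ring,
        cheb_add_two] <;> ring

lemma Mword_replicate (k : ZMod N) (n : ℕ) :
    Mword (List.replicate n k) = genMat k ^ n := by
  unfold Mword
  rw [List.reverse_replicate, List.map_replicate, List.prod_replicate]

lemma Mword_shape (k x y : ZMod N) (r : ℕ) :
    Mword (x :: (List.replicate r k ++ [y])) = genMat y * (genMat k ^ r * genMat x) := by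
  unfold Mword
  rw [List.reverse_cons, List.reverse_append, List.reverse_replicate]
  simp only [List.reverse_cons, List.reverse_nil, List.nil_append, List.map_append,
    List.map_cons, List.map_replicate, List.map_nil, List.prod_append, List.prod_cons,
    List.prod_replicate, List.prod_nil, List.singleton_append]
  rw [mul_one, mul_assoc]
end zmodN
section solcrit
variable {N : ℕ}

lemma entries_of_eq {a b c d a' b' c' d' : ZMod N}
    (h : !![a,b;c,d] = !![a',b';c',d']) : a = a' ∧ b = b' ∧ c = c' ∧ d = d' := by
  have h00 := Matrix.ext_iff.mpr h 0 0
  have h01 := Matrix.ext_iff.mpr h 0 1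
  have h10 := Matrix.ext_iff.mpr h 1 0
  have h11 := Matrix.ext_iff.mpr h 1 1
  simp at h00 h01 h10 h11
  exact ⟨h00, h01, h10, h11⟩

lemma exists_cheb_zero [NeZero N] (k : ZMod N) : ∃ i, 0 < i ∧ cheb k i = 0 := by
  have hU : IsUnit (genMat k) := by
    rw [Matrix.isUnit_iff_isUnit_det]
    unfold genMat
    rw [Matrix.det_fin_two_of]
    simp
  obtain ⟨i, j, hne, hij⟩ := Finite.exists_ne_map_eq_of_infinite (fun i : ℕ => genMat k ^ i)
  rcases Nat.lt_or_ge i j with hlt | hge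
  · have hd : genMat k ^ i * genMat k ^ (j - i) = genMat k ^ i * 1 := by
      rw [mul_one, ← pow_add]
      rw [show i + (j - i) = j by omega]
      exact hij.symm
    have h1 : genMat k ^ (j - i) = 1 := (hU.pow i).mul_left_cancel hd
    refine ⟨j - i, by omega, ?_⟩
    obtain ⟨d, hd'⟩ : ∃ d, j - i = d + 1 := ⟨j - i - 1, by omega⟩
    rw [hd'] at h1
    rw [genMat_pow] at h1
    have := (entries_of_eq (h1.trans Matrix.one_fin_two)).2.2.1
    rw [hd']
    simpa using this
  · have hlt : j < i := by omega
    have hd : genMat k ^ j * genMat k ^ (i - j) = genMat k ^ j * 1 := by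
      rw [mul_one, ← pow_add]
      rw [show j + (i - j) = i by omega]
      exact hij
    have h1 : genMat k ^ (i - j) = 1 := (hU.pow j).mul_left_cancel hd
    refine ⟨i - j, by omega, ?_⟩
    obtain ⟨d, hd'⟩ : ∃ d, i - j = d + 1 := ⟨i - j - 1, by omega⟩
    rw [hd'] at h1
    rw [genMat_pow] at h1
    have := (entries_of_eq (h1.trans Matrix.one_fin_two)).2.2.1
    rw [hd']
    simpa using this
end solcrit

section modN
variable {m : ℕ} (hm : 2 ≤ m)

/-- square roots of 1 mod 2·3^m -/
lemma sq1 (hm1 : 1 ≤ m) (x : ZMod (2*3^m)) (h : x * x = 1) : x = 1 ∨ x = -1 := by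
  haveI : NeZero (2*3^m) := ⟨by positivity⟩
  set a : ℤ := (x.val : ℤ) with ha
  have hx : ((a : ℤ) : ZMod (2*3^m)) = x := by
    rw [ha]
    push_cast
    exact ZMod.natCast_rightInverse x
  have hdvd : ((2*3^m : ℕ) : ℤ) ∣ (a * a - 1) := by
    rw [← ZMod.intCast_zmod_eq_zero_iff_dvd]
    push_cast
    rw [hx, h]
    ring
  have hdvd' : (2 * 3^m : ℤ) ∣ (a - 1) * (a + 1) := by
    have : ((2*3^m : ℕ) : ℤ) = 2 * 3^m := by push_cast; ring
    rw [this] at hdvd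
    convert hdvd using 1
    ring
  have h3 : (3:ℤ)^m ∣ (a - 1) * (a + 1) := dvd_trans (dvd_mul_left ((3:ℤ)^m) 2) hdvd'
  have h2 : (2:ℤ) ∣ (a - 1) * (a + 1) := dvd_trans (dvd_mul_right 2 ((3:ℤ)^m)) hdvd'
  have hodd : (2:ℤ) ∣ (a - 1) ∧ (2:ℤ) ∣ (a + 1) := by
    rcases Int.even_or_odd a with he | ho
    · exfalso
      obtain ⟨b, hb⟩ := he
      obtain ⟨c, hc⟩ := h2
      rw [hb] at hc
      have h' : 2*c - 4*(b*b) + 1 = 0 := by linear_combination -hc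
      generalize b*b = t at h'
      omega
    · obtain ⟨b, hb⟩ := ho
      constructor <;> [exact ⟨b, by omega⟩; exact ⟨b+1, by omega⟩]
  have hcop : IsCoprime (2:ℤ) ((3:ℤ)^m) :=
    (Int.isCoprime_iff_gcd_eq_one.mpr (by norm_num)).pow_right
  have hd3 : (3:ℤ) ∣ (a-1)*(a+1) := dvd_trans (dvd_pow_self 3 (by omega : m ≠ 0)) h3
  rcases (Int.prime_three.2.2 _ _ hd3) with h31 | h31
  · -- 3 ∣ a - 1 : x = 1
    left
    have hn1 : ¬ (3:ℤ) ∣ (a + 1) := by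
      intro hc; omega
    have h3m : (3:ℤ)^m ∣ (a - 1) := by
      rw [mul_comm] at h3
      exact Int.prime_three.pow_dvd_of_dvd_mul_left m hn1 h3
    have hNd : (2 * 3^m : ℤ) ∣ (a - 1) := hcop.mul_dvd hodd.1 h3m
    have : ((a - 1 : ℤ) : ZMod (2*3^m)) = 0 := by
      rw [ZMod.intCast_zmod_eq_zero_iff_dvd]
      convert hNd using 1
      push_cast; ring
    have := sub_eq_zero.mp (by push_cast at this ⊢; rw [hx] at this; exact this)
    exact this
  · -- 3 ∣ a + 1 : x = -1
    right
    have hn1 : ¬ (3:ℤ) ∣ (a - 1) := by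
      intro hc; omega
    have h3m : (3:ℤ)^m ∣ (a + 1) :=
      Int.prime_three.pow_dvd_of_dvd_mul_left m hn1 h3
    have hNd : (2 * 3^m : ℤ) ∣ (a + 1) := hcop.mul_dvd hodd.2 h3m
    have : ((a + 1 : ℤ) : ZMod (2*3^m)) = 0 := by
      rw [ZMod.intCast_zmod_eq_zero_iff_dvd]
      convert hNd using 1
      push_cast; ring
    push_cast at this
    rw [hx] at this
    linear_combination this
end modN
section stepA
variable {m : ℕ}

lemma mat2_ext {N : ℕ} {a b c d a' b' c' d' : ZMod N} (h1 : a = a') (h2 : b = b')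
    (h3 : c = c') (h4 : d = d') : !![a,b;c,d] = !![a',b';c',d'] := by
  rw [h1, h2, h3, h4]

lemma solution_iff_cheb (hm : 1 ≤ m) (k : ZMod (2*3^m)) {n : ℕ} (hn : 0 < n) :
    IsSolutionE (List.replicate n k) ↔ cheb k n = 0 := by
  obtain ⟨d, rfl⟩ : ∃ d, n = d + 1 := ⟨n - 1, by omega⟩
  unfold IsSolutionE
  rw [Mword_replicate, genMat_pow]
  constructor
  · rintro (h | h)
    · have := (entries_of_eq (h.trans Matrix.one_fin_two)).2.2.1
      simpa using this
    · have := (entries_of_eq (h.trans neg_one_fin_two)).2.2.1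
      simpa using this
  · intro h
    have hdet := cheb_det k d
    have hr := cheb_add_two k d
    have hsq : cheb k (d+2) * cheb k (d+2) = 1 := by
      linear_combination (k * cheb k (d+2) - cheb k (d+1)) * h + cheb k (d+2) * hr + hdet
    rcases sq1 hm _ hsq with h1 | h1
    · left
      have hcd : cheb k d = -1 := by linear_combination hr - h1 + k*h
      rw [h, h1, hcd, neg_zero, neg_neg]
      exact Matrix.one_fin_two.symm
    · right
      have hcd : cheb k d = 1 := by linear_combination hr - h1 + k*h
      rw [h, h1, hcd, neg_zero]
      exact neg_one_fin_two.symm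

lemma msize_set (hm : 1 ≤ m) (k : ZMod (2*3^m)) :
    {n : ℕ | 0 < n ∧ IsSolutionE (List.replicate n k)} = {n : ℕ | 0 < n ∧ cheb k n = 0} := by
  ext n
  simp only [Set.mem_setOf_eq]
  constructor
  · rintro ⟨h1, h2⟩; exact ⟨h1, (solution_iff_cheb hm k h1).mp h2⟩
  · rintro ⟨h1, h2⟩; exact ⟨h1, (solution_iff_cheb hm k h1).mpr h2⟩

lemma msize_mem (hm : 1 ≤ m) (k : ZMod (2*3^m)) :
    0 < monomialSize (2*3^m) k ∧ cheb k (monomialSize (2*3^m) k) = 0 := by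
  haveI : NeZero (2*3^m) := ⟨by positivity⟩
  have h : monomialSize (2*3^m) k ∈ {n : ℕ | 0 < n ∧ cheb k n = 0} := by
    rw [monomialSize, msize_set hm k]
    apply Nat.sInf_mem
    obtain ⟨i, hi1, hi2⟩ := exists_cheb_zero k
    exact ⟨i, hi1, hi2⟩
  exact h

lemma msize_min (hm : 1 ≤ m) (k : ZMod (2*3^m)) {i : ℕ} (h1 : 0 < i)
    (h2 : i < monomialSize (2*3^m) k) : cheb k i ≠ 0 := by
  intro hz
  have : monomialSize (2*3^m) k ≤ i := by
    rw [monomialSize, msize_set hm k]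
    exact Nat.sInf_le ⟨h1, hz⟩
  omega

lemma msize_eq (hm : 1 ≤ m) (k : ZMod (2*3^m)) {i : ℕ} (h1 : 0 < i)
    (h2 : cheb k i = 0) (h3 : ∀ i', 0 < i' → i' < i → cheb k i' ≠ 0) :
    monomialSize (2*3^m) k = i := by
  have hle : monomialSize (2*3^m) k ≤ i := by
    rw [monomialSize, msize_set hm k]; exact Nat.sInf_le ⟨h1, h2⟩
  rcases Nat.lt_or_ge (monomialSize (2*3^m) k) i with h | h
  · exact absurd ((msize_mem hm k).2) (h3 _ (msize_mem hm k).1 h)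
  · omega

lemma msize_ge3 (hm : 1 ≤ m) (k : ZMod (2*3^m)) (hk : k ≠ 0) :
    3 ≤ monomialSize (2*3^m) k := by
  haveI : Fact (1 < 2*3^m) := ⟨by have := Nat.one_le_pow m 3 (by norm_num); omega⟩
  obtain ⟨hpos, hz⟩ := msize_mem hm k
  by_contra hlt
  rcases (by omega : monomialSize (2*3^m) k = 1 ∨ monomialSize (2*3^m) k = 2) with he | he <;>
    rw [he] at hz
  · simp at hz
  · rw [cheb_two] at hz; exact hk hz

/-- core algebra, forward -/
lemma core_fwd (hm : 1 ≤ m) (k x y : ZMod (2*3^m)) (d : ℕ)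
    (h : genMat y * (genMat k ^ (d+1) * genMat x) = 1 ∨
         genMat y * (genMat k ^ (d+1) * genMat x) = -1) :
    cheb k (d+2)^2 = 1 ∧ cheb k (d+3) * (k - cheb k (d+2) * cheb k (d+3)) = 0 := by
  rw [genMat_pow] at h
  set A := cheb k (d+2) with hAdef
  set B := cheb k (d+1) with hBdef
  set C := cheb k d with hCdef
  set c3 := cheb k (d+3) with hc3def
  have hr1 : c3 = k*A - B := cheb_add_two k (d+1)
  have hr2 : A = k*B - C := cheb_add_two k d
  have key : ∀ ε : ZMod (2*3^m), ε * ε = 1 →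
      genMat y * (!![A, -B; B, -C] * genMat x) = !![ε, 0; 0, ε] →
      A^2 = 1 ∧ c3 * (k - A*c3) = 0 := by
    intro ε hε h
    rw [genMat, genMat, Matrix.mul_fin_two, Matrix.mul_fin_two] at h
    obtain ⟨q00, q01, q10, q11⟩ := entries_of_eq h
    have c00 : y*(A*x) - y*B - B*x + C = ε := by linear_combination q00
    have c01 : B - y*A = 0 := by linear_combination q01
    have c10 : A*x - B = 0 := by linear_combination q10
    have c11 : -A = ε := by linear_combination q11
    have hA : A = -ε := by linear_combination -c11
    have goal1 : A^2 = 1 := by linear_combination (ε - A) * c11 + hε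
    have hB : B = -(ε*y) := by linear_combination c01 + y*hA
    have hxy : x = y := by
      linear_combination (-ε)*c10 + (ε*x)*hA + (-ε)*hB + (y - x)*hε
    have h1 : C - B*x = ε := by linear_combination c00 - y*c10
    have h2 : B*(k - x) = 0 := by linear_combination h1 - hr2 - c11
    have h3 : y*(k - x) = 0 := by
      linear_combination (-ε)*h2 + (ε*(k - x))*hB + (-(y*(k-x)))*hε
    have h4 : y*(k - y) = 0 := by linear_combination h3 + y*hxy
    have hc3 : c3 = ε*y - ε*k := by linear_combination hr1 + k*hA - hB
    refine ⟨goal1, ?_⟩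
    rw [hc3, hA]
    linear_combination (-ε)*h4 + (ε*(y - k)^2)*hε
  rcases h with h | h
  · exact key 1 (by ring) (by rw [h]; rw [Matrix.one_fin_two])
  · exact key (-1) (by ring) (by rw [h]; rw [neg_one_fin_two])

/-- core algebra, backward -/
lemma core_bwd (hm : 1 ≤ m) (k : ZMod (2*3^m)) (d : ℕ)
    (h1 : cheb k (d+2)^2 = 1)
    (h2 : cheb k (d+3) * (k - cheb k (d+2) * cheb k (d+3)) = 0) :
    genMat (k - cheb k (d+2) * cheb k (d+3)) *
      (genMat k ^ (d+1) * genMat (k - cheb k (d+2) * cheb k (d+3))) = 1 ∨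
    genMat (k - cheb k (d+2) * cheb k (d+3)) *
      (genMat k ^ (d+1) * genMat (k - cheb k (d+2) * cheb k (d+3))) = -1 := by
  set A := cheb k (d+2) with hAdef
  set B := cheb k (d+1) with hBdef
  set C := cheb k d with hCdef
  set c3 := cheb k (d+3) with hc3def
  set y := k - A * c3 with hy
  have hr1 : c3 = k*A - B := cheb_add_two k (d+1)
  have hr2 : A = k*B - C := cheb_add_two k d
  have hδ : A = 1 ∨ A = -1 := sq1 hm A (by linear_combination h1)
  have hB2 : B = A*y := by
    rw [hy]; linear_combination hr1 + c3*h1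
  have key : genMat y * (genMat k ^ (d+1) * genMat y) = !![-A, 0; 0, -A] := by
    rw [genMat_pow]
    simp only [genMat]
    rw [Matrix.mul_fin_two, Matrix.mul_fin_two]
    apply mat2_ext
    · linear_combination (c3*A - y)*hB2 + hr2 + (-B)*hy + (c3*y)*h1 + h2
    · linear_combination hB2
    · linear_combination -hB2
    · ring
  rcases hδ with hA | hA
  · right
    rw [key, hA, neg_one_fin_two]
  · left
    rw [key, hA, neg_neg, Matrix.one_fin_two]
end stepA
section stepAlist
variable {m : ℕ}

lemma oplus_length {N : ℕ} (a b : List (ZMod N)) (ha : 2 ≤ a.length) (hb : 2 ≤ b.length) :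
    (oplus a b).length = a.length + b.length - 2 := by
  simp [oplus]
  omega

lemma shape2 {N : ℕ} (b : List (ZMod N)) (hb : 2 ≤ b.length) :
    ∃ x y, b = x :: ((b.drop 1).dropLast ++ [y]) := by
  match b with
  | [] => simp at hb
  | x :: t =>
    have ht : t ≠ [] := by
      intro h; rw [h] at hb; simp at hb
    refine ⟨x, t.getLast ht, ?_⟩
    have : (x :: t).drop 1 = t := rfl
    rw [this, List.dropLast_append_getLast ht]

lemma reducible_iff_witness (hm : 1 ≤ m) (k : ZMod (2*3^m)) (hk : k ≠ 0) :
    IsReducibleE (monoSol (2*3^m) k) ↔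
    ∃ j, 2 ≤ j ∧ j + 2 ≤ monomialSize (2*3^m) k ∧ cheb k j ^ 2 = 1 ∧
      cheb k (j+1) * (k - cheb k j * cheb k (j+1)) = 0 := by
  have hn3 := msize_ge3 hm k hk
  set n := monomialSize (2*3^m) k with hn
  constructor
  · rintro ⟨a, b, ha3, hb3, hbsol, htup⟩
    have hob : oplus a b = List.replicate n k := by
      rcases htup with ⟨i, hi⟩ | ⟨i, hi⟩
      · simpa [monoSol, List.rotate_replicate, ← hn] using hi
      · simpa [monoSol, List.rotate_replicate, List.reverse_replicate, ← hn] using hi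
    have hlen : (oplus a b).length = a.length + b.length - 2 :=
      oplus_length a b (by omega) (by omega)
    have hlen2 : n = a.length + b.length - 2 := by
      rw [hob] at hlen
      simp at hlen
      omega
    obtain ⟨x, y, hxy⟩ := shape2 b (by omega)
    have hmid : ∀ z ∈ (b.drop 1).dropLast, z = k := by
      intro z hz
      apply List.eq_of_mem_replicate (n := n)
      rw [← hob]
      simp only [oplus, List.mem_cons, List.mem_append]
      tauto
    have hmidr : (b.drop 1).dropLast = List.replicate ((b.drop 1).dropLast).length k :=
      List.eq_replicate_of_mem hmid
    have hmlen : ((b.drop 1).dropLast).length = b.length - 2 := by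
      simp
      omega
    obtain ⟨d, hd⟩ : ∃ d, b.length - 2 = d + 1 := ⟨b.length - 3, by omega⟩
    rw [hmidr, hmlen, hd] at hxy
    rw [hxy] at hbsol
    unfold IsSolutionE at hbsol
    rw [Mword_shape] at hbsol
    have hcond := core_fwd hm k x y d hbsol
    exact ⟨d + 2, by omega, by omega, hcond.1, hcond.2⟩
  · rintro ⟨j, hj2, hjn, h1, h2⟩
    obtain ⟨d, rfl⟩ : ∃ d, j = d + 2 := ⟨j - 2, by omega⟩
    set y := k - cheb k (d+2) * cheb k (d+3) with hy
    refine ⟨(k - y) :: (List.replicate (n - (d+3)) k ++ [k - y]),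
            y :: (List.replicate (d+1) k ++ [y]), ?_, ?_, ?_, ?_⟩
    · simp
      omega
    · simp
    · unfold IsSolutionE
      rw [Mword_shape, hy]
      exact core_bwd hm k d h1 h2
    · left
      refine ⟨0, ?_⟩
      rw [monoSol, ← hn, List.rotate_replicate]
      show (k - y + ((y :: (List.replicate (d+1) k ++ [y])).getLastD 0)) :: _ = _
      have hblast : ((y :: (List.replicate (d+1) k ++ [y])).getLastD 0) = y := by
        rw [← List.cons_append, List.getLastD_concat]
      have halast : (((k - y) :: (List.replicate (n - (d+3)) k ++ [k - y])).getLastD 0) = k - y := by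
        rw [← List.cons_append, List.getLastD_concat]
      simp only [oplus, hblast, halast, List.headD_cons, List.drop_succ_cons, List.drop_zero,
        List.dropLast_concat]
      rw [sub_add_cancel]
      have hmem : ∀ z ∈ (k :: (List.replicate (n - (d+3)) k ++
          (k :: List.replicate (d+1) k))), z = k := by
        intro z hz
        simp [List.mem_cons, List.mem_append, List.mem_replicate] at hz
        tauto
      have heq := List.eq_replicate_of_mem hmem
      rw [heq]
      congr 1
      simp
      omega

lemma irreducible_iff_witness (hm : 1 ≤ m) (k : ZMod (2*3^m)) (hk : k ≠ 0) :
    IsIrreducibleE (monoSol (2*3^m) k) ↔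
    ∀ j, 2 ≤ j → j + 2 ≤ monomialSize (2*3^m) k →
      ¬(cheb k j ^ 2 = 1 ∧ cheb k (j+1) * (k - cheb k j * cheb k (j+1)) = 0) := by
  unfold IsIrreducibleE
  have hsol : IsSolutionE (monoSol (2*3^m) k) := by
    rw [monoSol, solution_iff_cheb hm k (msize_mem hm k).1]
    exact (msize_mem hm k).2
  have hlen : 3 ≤ (monoSol (2*3^m) k).length := by
    rw [monoSol]
    simpa using msize_ge3 hm k hk
  constructor
  · rintro ⟨-, -, hnred⟩ j hj2 hjn hc
    exact hnred ((reducible_iff_witness hm k hk).mpr ⟨j, hj2, hjn, hc.1, hc.2⟩)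
  · intro h
    refine ⟨hsol, hlen, fun hred => ?_⟩
    obtain ⟨j, hj2, hjn, h1, h2⟩ := (reducible_iff_witness hm k hk).mp hred
    exact h j hj2 hjn ⟨h1, h2⟩

lemma not_irr_zero (hm : 1 ≤ m) : ¬ IsIrreducibleE (monoSol (2*3^m) (0 : ZMod (2*3^m))) := by
  haveI : Fact (1 < 2*3^m) := ⟨by have := Nat.one_le_pow m 3 (by norm_num); omega⟩
  have hms : monomialSize (2*3^m) (0 : ZMod (2*3^m)) = 2 := by
    apply msize_eq hm _ (by norm_num)
    · rw [cheb_two]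
    · intro i' h1 h2
      have : i' = 1 := by omega
      rw [this]
      simp
  rintro ⟨-, hlen, -⟩
  rw [monoSol, hms] at hlen
  simp at hlen
end stepAlist
section intlemmas

/-- pattern of cheb 1 over ZMod 2 -/
lemma pat2_odd_zmod : ∀ i, cheb (1 : ZMod 2) (3*i) = 0 ∧ cheb (1:ZMod 2) (3*i+1) = 1 ∧
    cheb (1:ZMod 2) (3*i+2) = 1 := by
  intro i
  induction i with
  | zero => exact ⟨by simp, by simp, by simp⟩
  | succ i ih =>
    obtain ⟨e0, e1, e2⟩ := ih
    have f0 : cheb (1:ZMod 2) (3*(i+1)) = 1 * cheb (1:ZMod 2) (3*i+2) - cheb (1:ZMod 2) (3*i+1) := by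
      rw [show 3*(i+1) = (3*i+1)+2 by ring]; exact cheb_add_two _ (3*i+1)
    have f1 : cheb (1:ZMod 2) (3*(i+1)+1) = 1 * cheb (1:ZMod 2) (3*(i+1)) - cheb (1:ZMod 2) (3*i+2) := by
      rw [show 3*(i+1)+1 = (3*i+2)+2 by ring, show 3*(i+1) = (3*i+2)+1 by ring]
      exact cheb_add_two _ (3*i+2)
    have f2 : cheb (1:ZMod 2) (3*(i+1)+2) = 1 * cheb (1:ZMod 2) (3*(i+1)+1) - cheb (1:ZMod 2) (3*(i+1)) :=
      cheb_add_two _ (3*(i+1))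
    have g0 : cheb (1:ZMod 2) (3*(i+1)) = 0 := by rw [f0, e1, e2]; ring
    have g1 : cheb (1:ZMod 2) (3*(i+1)+1) = 1 := by
      rw [f1, g0, e2]; decide
    have g2 : cheb (1:ZMod 2) (3*(i+1)+2) = 1 := by rw [f2, g1, g0]; ring
    exact ⟨g0, g1, g2⟩

lemma pat2_even_zmod : ∀ i, cheb (0 : ZMod 2) (2*i) = 0 ∧ cheb (0:ZMod 2) (2*i+1) = 1 := by
  intro i
  induction i with
  | zero => exact ⟨by simp, by simp⟩
  | succ i ih =>
    obtain ⟨e0, e1⟩ := ih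
    have f0 : cheb (0:ZMod 2) (2*(i+1)) = 0 * cheb (0:ZMod 2) (2*i+1) - cheb (0:ZMod 2) (2*i) := by
      rw [show 2*(i+1) = (2*i)+2 by ring]; exact cheb_add_two _ (2*i)
    have f1 : cheb (0:ZMod 2) (2*(i+1)+1) = 0 * cheb (0:ZMod 2) (2*(i+1)) - cheb (0:ZMod 2) (2*i+1) := by
      rw [show 2*(i+1)+1 = (2*i+1)+2 by ring, show 2*(i+1) = (2*i+1)+1 by ring]
      exact cheb_add_two _ (2*i+1)
    have g0 : cheb (0:ZMod 2) (2*(i+1)) = 0 := by rw [f0, e0, e1]; ring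
    have g1 : cheb (0:ZMod 2) (2*(i+1)+1) = 1 := by
      rw [f1, g0, e1]
      decide
    exact ⟨g0, g1⟩

lemma pat3_zero_zmod : ∀ i, cheb (0 : ZMod 3) (2*i) = 0 ∧ cheb (0:ZMod 3) (2*i+1) = (-1)^i := by
  intro i
  induction i with
  | zero => exact ⟨by simp, by simp⟩
  | succ i ih =>
    obtain ⟨e0, e1⟩ := ih
    have f0 : cheb (0:ZMod 3) (2*(i+1)) = 0 * cheb (0:ZMod 3) (2*i+1) - cheb (0:ZMod 3) (2*i) := by
      rw [show 2*(i+1) = (2*i)+2 by ring]; exact cheb_add_two _ (2*i)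
    have f1 : cheb (0:ZMod 3) (2*(i+1)+1) = 0 * cheb (0:ZMod 3) (2*(i+1)) - cheb (0:ZMod 3) (2*i+1) := by
      rw [show 2*(i+1)+1 = (2*i+1)+2 by ring, show 2*(i+1) = (2*i+1)+1 by ring]
      exact cheb_add_two _ (2*i+1)
    have g0 : cheb (0:ZMod 3) (2*(i+1)) = 0 := by rw [f0, e0, e1]; ring
    have g1 : cheb (0:ZMod 3) (2*(i+1)+1) = (-1)^(i+1) := by rw [f1, g0, e1]; ring
    exact ⟨g0, g1⟩

lemma pat3_unit_zmod (b : ZMod 3) (hb : b ≠ 0) : ∀ i, cheb b (3*i) = 0 ∧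
    cheb b (3*i+1) = (-b)^i ∧ cheb b (3*i+2) = (-b)^i * b := by
  have hb2 : b * b = 1 := by revert hb; revert b; decide
  intro i
  induction i with
  | zero => exact ⟨by simp, by simp, by simp⟩
  | succ i ih =>
    obtain ⟨e0, e1, e2⟩ := ih
    have f0 : cheb b (3*(i+1)) = b * cheb b (3*i+2) - cheb b (3*i+1) := by
      rw [show 3*(i+1) = (3*i+1)+2 by ring]; exact cheb_add_two _ (3*i+1)
    have f1 : cheb b (3*(i+1)+1) = b * cheb b (3*(i+1)) - cheb b (3*i+2) := by
      rw [show 3*(i+1)+1 = (3*i+2)+2 by ring, show 3*(i+1) = (3*i+2)+1 by ring]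
      exact cheb_add_two _ (3*i+2)
    have f2 : cheb b (3*(i+1)+2) = b * cheb b (3*(i+1)+1) - cheb b (3*(i+1)) :=
      cheb_add_two _ (3*(i+1))
    have g0 : cheb b (3*(i+1)) = 0 := by
      rw [f0, e1, e2]; linear_combination ((-b)^i) * hb2
    have g1 : cheb b (3*(i+1)+1) = (-b)^(i+1) := by rw [f1, g0, e2]; ring
    have g2 : cheb b (3*(i+1)+2) = (-b)^(i+1) * b := by rw [f2, g1, g0]; ring
    exact ⟨g0, g1, g2⟩

lemma cheb_int_cast (M : ℕ) (a : ℤ) (i : ℕ) :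
    ((cheb a i : ℤ) : ZMod M) = cheb ((a : ZMod M)) i :=
  (cheb_map a (Int.castRingHom (ZMod M)) i).symm

lemma dvd2_iff (x : ℤ) : (2:ℤ) ∣ x ↔ ((x : ZMod 2) = 0) := by
  rw [ZMod.intCast_zmod_eq_zero_iff_dvd]
  norm_num

lemma dvd3_iff (x : ℤ) : (3:ℤ) ∣ x ↔ ((x : ZMod 3) = 0) := by
  rw [ZMod.intCast_zmod_eq_zero_iff_dvd]
  norm_num

lemma dvd2_cheb_odd {a : ℤ} (ha : ¬(2:ℤ)∣a) (i : ℕ) : ((2:ℤ) ∣ cheb a i ↔ 3 ∣ i) := by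
  have hb : (a : ZMod 2) = 1 := by
    have h0 : ∀ x : ZMod 2, x = 0 ∨ x = 1 := by decide
    rcases h0 (a : ZMod 2) with h | h
    · exact absurd ((dvd2_iff a).mpr h) ha
    · exact h
  rw [dvd2_iff, cheb_int_cast, hb]
  obtain ⟨q, r, hqr, hr⟩ : ∃ q r, i = 3*q + r ∧ r < 3 := ⟨i/3, i%3, by omega, by omega⟩
  have hp := pat2_odd_zmod q
  interval_cases r
  · simp only [Nat.add_zero] at hqr
    rw [hqr, hp.1]
    constructor
    · intro _; omega
    · intro _; rfl
  · rw [hqr, hp.2.1]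
    constructor
    · intro h; exact absurd h (by decide)
    · intro h; omega
  · rw [hqr, hp.2.2]
    constructor
    · intro h; exact absurd h (by decide)
    · intro h; omega

lemma dvd2_cheb_even {a : ℤ} (ha : (2:ℤ)∣a) (i : ℕ) : ((2:ℤ) ∣ cheb a i ↔ 2 ∣ i) := by
  have hb : (a : ZMod 2) = 0 := (dvd2_iff a).mp ha
  rw [dvd2_iff, cheb_int_cast, hb]
  obtain ⟨q, r, hqr, hr⟩ : ∃ q r, i = 2*q + r ∧ r < 2 := ⟨i/2, i%2, by omega, by omega⟩
  have hp := pat2_even_zmod q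
  interval_cases r
  · simp only [Nat.add_zero] at hqr
    rw [hqr, hp.1]
    constructor
    · intro _; omega
    · intro _; rfl
  · rw [hqr, hp.2]
    constructor
    · intro h; exact absurd h (by decide)
    · intro h; omega

lemma dvd3_cheb_unit {a : ℤ} (ha : ¬(3:ℤ)∣a) (i : ℕ) : ((3:ℤ) ∣ cheb a i ↔ 3 ∣ i) := by
  have hb : (a : ZMod 3) ≠ 0 := fun h => ha ((dvd3_iff a).mpr h)
  rw [dvd3_iff, cheb_int_cast]
  obtain ⟨q, r, hqr, hr⟩ : ∃ q r, i = 3*q + r ∧ r < 3 := ⟨i/3, i%3, by omega, by omega⟩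
  have hp := pat3_unit_zmod _ hb q
  have hnb : (-(a : ZMod 3))^q ≠ 0 := pow_ne_zero _ (neg_ne_zero.mpr hb)
  interval_cases r
  · simp only [Nat.add_zero] at hqr
    rw [hqr, hp.1]
    constructor
    · intro _; omega
    · intro _; rfl
  · rw [hqr, hp.2.1]
    constructor
    · intro h; exact absurd h hnb
    · intro h; omega
  · rw [hqr, hp.2.2]
    constructor
    · intro h; exact absurd h (mul_ne_zero hnb hb)
    · intro h; omega

lemma dvd3_cheb_even {a : ℤ} (ha : (3:ℤ)∣a) (c : ℕ) : (3:ℤ) ∣ cheb a (2*c) := by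
  have hb : (a : ZMod 3) = 0 := (dvd3_iff a).mp ha
  rw [dvd3_iff, cheb_int_cast, hb]
  exact (pat3_zero_zmod c).1

lemma dvd3_cheb_odd_sign {a : ℤ} (ha : (3:ℤ)∣a) (c : ℕ) :
    (3:ℤ) ∣ (cheb a (2*c+1) - (-1)^c) := by
  have hb : (a : ZMod 3) = 0 := (dvd3_iff a).mp ha
  rw [dvd3_iff]
  push_cast
  rw [cheb_int_cast, hb, (pat3_zero_zmod c).2]
  ring

lemma not_dvd3_cheb_odd {a : ℤ} (ha : (3:ℤ)∣a) (c : ℕ) : ¬ (3:ℤ) ∣ cheb a (2*c+1) := by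
  intro h
  have := dvd3_cheb_odd_sign ha c
  have h1 : (3:ℤ) ∣ (-1)^c := by
    have := dvd_sub h this
    simpa using this
  rcases Nat.even_or_odd c with hc | hc
  · rw [hc.neg_one_pow] at h1; omega
  · rw [hc.neg_one_pow] at h1; omega

/-- Lemma A : expansion of cheb mod a² -/
lemma chebA (a : ℤ) : ∀ c : ℕ, ∃ s r : ℤ,
    cheb a (2*c) = (-1)^(c+1) * c * a + a^2 * s ∧ cheb a (2*c+1) = (-1)^c + a^2 * r := by
  intro c
  induction c with
  | zero => exact ⟨0, 0, by simp, by simp⟩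
  | succ c ih =>
    obtain ⟨s, r, h0, h1⟩ := ih
    have f0 : cheb a (2*(c+1)) = a * cheb a (2*c+1) - cheb a (2*c) := by
      rw [show 2*(c+1) = (2*c)+2 by ring]; exact cheb_add_two a (2*c)
    have f1 : cheb a (2*(c+1)+1) = a * cheb a (2*(c+1)) - cheb a (2*c+1) := by
      rw [show 2*(c+1)+1 = (2*c+1)+2 by ring, show 2*(c+1) = (2*c+1)+1 by ring]
      exact cheb_add_two a (2*c+1)
    refine ⟨a*r - s, (-1)^c * (c+1) + a*(a*r - s) - r, ?_, ?_⟩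
    · rw [f0, h0, h1]
      push_cast
      ring
    · rw [f1, f0, h0, h1]
      push_cast
      ring

lemma three_adic (c : ℕ) (hc : 0 < c) : ∃ e c₀, c = 3^e * c₀ ∧ ¬ 3 ∣ c₀ :=
  ⟨c.factorization 3, c / 3^(c.factorization 3),
    (Nat.ordProj_mul_ordCompl_eq_self c 3).symm,
    Nat.not_dvd_ordCompl (by norm_num) hc.ne'⟩

/-- the key 3-adic valuation lemma -/
lemma Delta {w : ℕ} {u a : ℤ} (hu : ¬(3:ℤ)∣u) (ha : a = 3^(w+1) * u) :
    ∀ e c : ℕ, ¬(3 ∣ c) → ∃ g : ℤ,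
      cheb a (2*(3^e*c)) = 3^(w+1+e) * g ∧ ¬(3:ℤ)∣g := by
  have ha3 : (3:ℤ) ∣ a := by rw [ha]; exact Dvd.dvd.mul_right (dvd_pow_self 3 (by omega)) u
  intro e
  induction e with
  | zero =>
    intro c hc
    obtain ⟨s, r, h0, _⟩ := chebA a c
    refine ⟨(-1)^(c+1) * c * u + 3^(w+1) * u^2 * s, ?_, ?_⟩
    · rw [show (2*(3^0*c)) = 2*c by ring, h0, ha]
      ring
    · intro hg
      have h3 : (3:ℤ) ∣ (-1)^(c+1) * c * u := by
        have hd : (3:ℤ) ∣ 3^(w+1) * u^2 * s := Dvd.dvd.mul_right (Dvd.dvd.mul_right (dvd_pow_self 3 (by omega)) _) _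
        have := dvd_sub hg hd
        simpa using this
      rcases Int.prime_three.2.2 _ _ h3 with h | h
      · rcases Int.prime_three.2.2 _ _ h with h' | h'
        · rcases Nat.even_or_odd (c+1) with hc' | hc'
          · rw [hc'.neg_one_pow] at h'; omega
          · rw [hc'.neg_one_pow] at h'; omega
        · rw [Int.natCast_dvd_natCast (m := 3) (n := c) |>.symm] at hc
          exact hc (by exact_mod_cast h')
      · exact hu h
  | succ e ih =>
    intro c hc
    obtain ⟨g, hg, hg3⟩ := ih c hc
    have hpos : 0 < 3^e*c := by
      have : c ≠ 0 := by intro h; rw [h] at hc; exact hc ⟨0, rfl⟩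
      positivity
    obtain ⟨j0, hj0⟩ : ∃ j0, 2*(3^e*c) = j0 + 1 := ⟨2*(3^e*c) - 1, by omega⟩
    have htrip := cheb_trip a j0
    have hidx : 3*(j0+1) = 2*(3^(e+1)*c) := by rw [← hj0]; ring
    rw [hidx] at htrip
    set x := cheb a (2*(3^e*c)) with hx
    set y := cheb a (2*(3^e*c)+1) with hyy
    have hy3 : ¬ (3:ℤ) ∣ y := not_dvd3_cheb_odd ha3 (3^e*c)
    have hxrw : cheb a (j0+1) = x := by rw [hx, hj0]
    have hyrw : cheb a (j0+1+1) = y := by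
      rw [hyy, show j0+1+1 = 2*(3^e*c)+1 from by omega]
    rw [hxrw, hyrw] at htrip
    set T1 : ℤ := 3^(2*w+e+2)*u*g*y with hT1
    set T2 : ℤ := (a^2-1)*3^(2*w+2*e+1)*g^2 with hT2
    refine ⟨g * (y^2 - T1 + T2), ?_, ?_⟩
    · rw [htrip, hg, hT1, hT2, ha]
      ring
    · intro hgh
      rcases Int.prime_three.2.2 _ _ hgh with h | h
      · exact hg3 h
      · have h31 : (3:ℤ) ∣ T1 := by
          rw [hT1]
          exact Dvd.dvd.mul_right (Dvd.dvd.mul_right (Dvd.dvd.mul_right (dvd_pow_self 3 (by omega)) _) _) _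
        have h32 : (3:ℤ) ∣ T2 := by
          rw [hT2]
          exact Dvd.dvd.mul_right (Dvd.dvd.mul_left (dvd_pow_self 3 (by omega)) _) _
        have hy2 : (3:ℤ) ∣ y^2 := by
          have : y^2 = (y^2 - T1 + T2) + T1 - T2 := by ring
          rw [this]
          exact dvd_sub (dvd_add h h31) h32
        rcases Int.prime_three.2.2 _ _ (by rw [show y^2 = y*y by ring] at hy2; exact hy2) with h' | h' <;>
          exact hy3 h'

end intlemmas
section cases
variable {m : ℕ}

lemma cop23m : IsCoprime (2:ℤ) ((3:ℤ)^m) :=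
  (Int.isCoprime_iff_gcd_eq_one.mpr (by norm_num)).pow_right

lemma hN2 : (2:ℤ) ∣ (2*3^m:ℤ) := dvd_mul_right 2 _
lemma hN3m : (3:ℤ)^m ∣ (2*3^m:ℤ) := dvd_mul_left _ 2
lemma hN3 (hm : 1 ≤ m) : (3:ℤ) ∣ (2*3^m:ℤ) :=
  dvd_trans (dvd_pow_self 3 (by omega)) hN3m

lemma caseA (hm : 2 ≤ m) (k : ZMod (2*3^m)) (h3 : ¬ (3:ℤ) ∣ (k.val:ℤ)) :
    IsIrreducibleE (monoSol (2*3^m) k) := by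
  haveI : NeZero (2*3^m) := ⟨by positivity⟩
  have hm1 : 1 ≤ m := by omega
  set a : ℤ := (k.val : ℤ) with hadef
  have hk0 : k ≠ 0 := by
    intro h
    apply h3
    rw [hadef, h]
    simp
  apply (irreducible_iff_witness hm1 k hk0).mpr
  intro j hj2 hjn hc
  obtain ⟨h1, h2⟩ := hc
  have hka : ((a:ℤ) : ZMod (2*3^m)) = k := by
    rw [hadef]
    push_cast
    exact ZMod.natCast_rightInverse k
  have hcast : ∀ i, cheb k i = ((cheb a i : ℤ) : ZMod (2*3^m)) := by
    intro i
    rw [← hka]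
    exact (cheb_int_cast _ a i).symm
  have hNc : ((2*3^m : ℕ):ℤ) = (2*3^m:ℤ) := by push_cast; ring
  have hNz : ∀ x : ℤ, ((x:ℤ) : ZMod (2*3^m)) = 0 ↔ (2*3^m:ℤ) ∣ x := by
    intro x
    rw [ZMod.intCast_zmod_eq_zero_iff_dvd, hNc]
  have hint1 : (2*3^m:ℤ) ∣ (cheb a j * cheb a j - 1) := by
    rw [← hNz]
    push_cast
    rw [← hcast j]
    linear_combination h1
  have hint2 : (2*3^m:ℤ) ∣ (cheb a (j+1) * (a - cheb a j * cheb a (j+1))) := by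
    rw [← hNz]
    push_cast
    rw [hka, ← hcast j, ← hcast (j+1)]
    linear_combination h2
  have hd3j : ¬ (3:ℤ) ∣ cheb a j := by
    intro hd
    have hA := dvd_trans (hN3 hm1) hint1
    have hB : (3:ℤ) ∣ cheb a j * cheb a j := hd.mul_left _
    set X := cheb a j * cheb a j
    omega
  have hj3 : ¬ (3 ∣ j) := fun h => hd3j ((dvd3_cheb_unit h3 j).mpr h)
  have hd2j : ¬ (2:ℤ) ∣ cheb a j := by
    intro hd
    have hA := dvd_trans hN2 hint1
    have hB : (2:ℤ) ∣ cheb a j * cheb a j := hd.mul_left _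
    set X := cheb a j * cheb a j
    omega
  have hpar : ∀ i', ¬ 2∣j → (¬(2:ℤ)∣a → 3 ∣ i') → ((2:ℤ)∣a → 2∣i') → (2:ℤ) ∣ cheb a i' := by
    intro i' hjodd hcase1 hcase2
    by_cases hpa : (2:ℤ) ∣ a
    · exact (dvd2_cheb_even hpa i').mpr (hcase2 hpa)
    · exact (dvd2_cheb_odd hpa i').mpr (hcase1 hpa)
  have hjodd : (2:ℤ)∣a → ¬ 2 ∣ j := fun hpa h => hd2j ((dvd2_cheb_even hpa j).mpr h)
  rcases (by omega : j % 3 = 1 ∨ j % 3 = 2) with hmod | hmod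
  · -- j ≡ 1 mod 3 : contradiction at j - 1
    obtain ⟨i, rfl⟩ : ∃ i, j = i + 2 := ⟨j-2, by omega⟩
    have hd3y : ¬(3:ℤ) ∣ cheb a (i+2+1) :=
      fun h => (by omega : ¬ 3∣(i+2+1)) ((dvd3_cheb_unit h3 (i+2+1)).mp h)
    have h3m2 : (3:ℤ)^m ∣ (a - cheb a (i+2) * cheb a (i+2+1)) := by
      have hprod := dvd_trans hN3m hint2
      exact Int.prime_three.pow_dvd_of_dvd_mul_left m hd3y hprod
    have hrec : cheb a (i+2+1) = a * cheb a (i+2) - cheb a (i+1) := cheb_add_two a (i+1)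
    have hcomb : cheb a (i+1) = cheb a (i+2)*(a - cheb a (i+2)*cheb a (i+2+1)) +
        cheb a (i+2+1)*(cheb a (i+2)*cheb a (i+2) - 1) := by
      linear_combination hrec
    have hdm : (3:ℤ)^m ∣ cheb a (i+1) := by
      rw [hcomb]
      exact dvd_add (h3m2.mul_left _) ((dvd_trans hN3m hint1).mul_left _)
    have h2dm : (2:ℤ) ∣ cheb a (i+1) := by
      by_cases hpa : (2:ℤ) ∣ a
      · have : ¬ 2∣(i+2) := hjodd hpa
        exact (dvd2_cheb_even hpa (i+1)).mpr (by omega)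
      · exact (dvd2_cheb_odd hpa (i+1)).mpr (by omega)
    have hNdvd : (2*3^m:ℤ) ∣ cheb a (i+1) := cop23m.mul_dvd h2dm hdm
    have hz : cheb k (i+1) = 0 := by
      rw [hcast (i+1), hNz]
      exact hNdvd
    exact msize_min hm1 k (by omega) (by omega) hz
  · -- j ≡ 2 mod 3 : contradiction at j + 1
    have hd3y : (3:ℤ) ∣ cheb a (j+1) := (dvd3_cheb_unit h3 (j+1)).mpr (by omega)
    have hnd3 : ¬(3:ℤ) ∣ (a - cheb a j * cheb a (j+1)) := by
      intro hd
      apply h3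
      have hX : (3:ℤ) ∣ cheb a j * cheb a (j+1) := hd3y.mul_left _
      set X := cheb a j * cheb a (j+1)
      omega
    have h3m2 : (3:ℤ)^m ∣ cheb a (j+1) := by
      have hprod := dvd_trans hN3m hint2
      rw [mul_comm] at hprod
      exact Int.prime_three.pow_dvd_of_dvd_mul_left m hnd3 hprod
    have h2y : (2:ℤ) ∣ cheb a (j+1) := by
      by_cases hpa : (2:ℤ) ∣ a
      · have : ¬ 2∣j := hjodd hpa
        exact (dvd2_cheb_even hpa (j+1)).mpr (by omega)
      · exact (dvd2_cheb_odd hpa (j+1)).mpr (by omega)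
    have hNdvd : (2*3^m:ℤ) ∣ cheb a (j+1) := cop23m.mul_dvd h2y h3m2
    have hz : cheb k (j+1) = 0 := by
      rw [hcast (j+1), hNz]
      exact hNdvd
    exact msize_min hm1 k (by omega) (by omega) hz
end cases
section casesC
variable {m : ℕ}

lemma odd_mul_sub_one (x y : ℤ) (hx : ¬(2:ℤ)∣x) (hy : ¬(2:ℤ)∣y) : (2:ℤ) ∣ (x*y - 1) := by
  obtain ⟨p, hp⟩ : ∃ p, x = 2*p+1 := ⟨(x-1)/2, by omega⟩
  obtain ⟨q, hq⟩ : ∃ q, y = 2*q+1 := ⟨(y-1)/2, by omega⟩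
  exact ⟨2*p*q + p + q, by rw [hp, hq]; ring⟩

lemma not_two_dvd_pow3 (i : ℕ) : ¬ (2:ℤ) ∣ 3^i := by
  induction i with
  | zero => decide
  | succ i ih =>
    rintro ⟨s, hs⟩
    rw [pow_succ] at hs
    exact ih ⟨s - 3^i, by omega⟩

lemma not_two_dvd_sq (x : ℤ) (hx : ¬(2:ℤ)∣x) : ¬ (2:ℤ) ∣ x*x := fun h => by
  rcases Int.prime_two.2.2 _ _ h with h' | h' <;> exact hx h'

lemma twoN (M : ℕ) (X : ℤ) (h : (2:ℤ) ∣ X) : (2*3^M:ℤ) ∣ 3^M * X := by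
  obtain ⟨q, rfl⟩ := h
  exact ⟨q, by ring⟩

lemma caseC (w : ℕ) (k : ZMod (2*3^(w+2))) (ha3 : 3^(w+1) ∣ k.val)
    (haodd : ¬ 2 ∣ k.val) (hk0 : k ≠ 0) : IsIrreducibleE (monoSol (2*3^(w+2)) k) := by
  haveI : NeZero (2*3^(w+2)) := ⟨by positivity⟩
  haveI : Fact (1 < 2*3^(w+2)) := ⟨by have := Nat.one_le_pow (w+2) 3 (by norm_num); omega⟩
  have hm1 : 1 ≤ w + 2 := by omega
  have hp3 : (0:ℤ) < 3^w := pow_pos (by norm_num) w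
  set a : ℤ := (k.val : ℤ) with hadef
  obtain ⟨c, hc⟩ := ha3
  have hcodd : ¬ 2 ∣ c := by
    rintro ⟨s, hs⟩
    exact haodd ⟨3^(w+1)*s, by rw [hc, hs]; ring⟩
  have hcoddZ : ¬ (2:ℤ) ∣ (c:ℤ) := fun h => hcodd (by exact_mod_cast h)
  have haoddZ : ¬ (2:ℤ) ∣ a := by
    intro h
    rw [hadef] at h
    exact haodd (by exact_mod_cast h)
  have hka : ((a:ℤ) : ZMod (2*3^(w+2))) = k := by
    rw [hadef]; push_cast; exact ZMod.natCast_rightInverse k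
  have hcast : ∀ i, cheb k i = ((cheb a i : ℤ) : ZMod (2*3^(w+2))) := by
    intro i; rw [← hka]; exact (cheb_int_cast _ a i).symm
  have hNc : ((2*3^(w+2) : ℕ):ℤ) = (2*3^(w+2):ℤ) := by push_cast; ring
  have hNz : ∀ x : ℤ, ((x:ℤ) : ZMod (2*3^(w+2))) = 0 ↔ (2*3^(w+2):ℤ) ∣ x := by
    intro x; rw [ZMod.intCast_zmod_eq_zero_iff_dvd, hNc]
  have haZ : a = 3^(w+1) * (c:ℤ) := by rw [hadef, hc]; push_cast; ring
  obtain ⟨e, he⟩ : ∃ e : ZMod (2*3^(w+2)), e = (3:ZMod (2*3^(w+2)))^(w+2) := ⟨_, rfl⟩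
  -- facts
  have f1 : k * k = e := by
    have h0 : ((a*a - 3^(w+2) : ℤ) : ZMod (2*3^(w+2))) = 0 := by
      rw [hNz, show a*a - 3^(w+2) = 3^(w+2) * (3^w * ((c:ℤ)*(c:ℤ)) - 1) by rw [haZ]; ring]
      exact twoN _ _ (odd_mul_sub_one _ _ (not_two_dvd_pow3 w) (not_two_dvd_sq _ hcoddZ))
    push_cast at h0
    rw [hka] at h0
    rw [he]
    linear_combination h0
  have f2 : 2 * e = 0 := by
    have h0 : ((2*3^(w+2) : ℤ) : ZMod (2*3^(w+2))) = 0 := by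
      rw [hNz]
    push_cast at h0
    rw [he]
    linear_combination h0
  have f3 : e * e = e := by
    have h0 : ((3^(w+2)*3^(w+2) - 3^(w+2) : ℤ) : ZMod (2*3^(w+2))) = 0 := by
      rw [hNz, show (3:ℤ)^(w+2)*3^(w+2) - 3^(w+2) = 3^(w+2) * (3^(w+2) - 1) by ring]
      exact twoN _ _ (by
        obtain ⟨p, hp⟩ : ∃ p, (3:ℤ)^(w+2) = 2*p+1 := ⟨(3^(w+2)-1)/2, by
          have := not_two_dvd_pow3 (w+2); omega⟩
        exact ⟨p, by omega⟩)
    push_cast at h0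
    rw [he]
    linear_combination h0
  have f4 : k * e = e := by
    have h0 : ((a*3^(w+2) - 3^(w+2) : ℤ) : ZMod (2*3^(w+2))) = 0 := by
      rw [hNz, show a*3^(w+2) - 3^(w+2) = 3^(w+2) * (a - 1) by ring]
      exact twoN _ _ (by obtain ⟨p, hp⟩ : ∃ p, a = 2*p+1 := ⟨(a-1)/2, by omega⟩; exact ⟨p, by omega⟩)
    push_cast at h0
    rw [hka] at h0
    rw [he]
    linear_combination h0
  have f7 : 3 * k = e := by
    have h0 : ((3*a - 3^(w+2) : ℤ) : ZMod (2*3^(w+2))) = 0 := by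
      rw [hNz, show 3*a - 3^(w+2) = 3^(w+2) * ((c:ℤ) - 1) by rw [haZ]; ring]
      exact twoN _ _ (by obtain ⟨p, hp⟩ : ∃ p, (c:ℤ) = 2*p+1 := ⟨((c:ℤ)-1)/2, by omega⟩; exact ⟨p, by omega⟩)
    push_cast at h0
    rw [hka] at h0
    rw [he]
    linear_combination h0
  have f5 : e ≠ 0 := by
    intro h0
    have h1 : ((3^(w+2) : ℤ) : ZMod (2*3^(w+2))) = 0 := by
      push_cast
      rw [← he]
      exact h0
    rw [hNz] at h1
    have := Int.le_of_dvd (by positivity) h1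
    have h9 : (3:ℤ)^(w+2) = 9 * 3^w := by ring
    omega
  have f6 : e ≠ 1 := by
    intro h0
    have h1 : ((3^(w+2) - 1 : ℤ) : ZMod (2*3^(w+2))) = 0 := by
      push_cast
      rw [← he, h0]
      ring
    rw [hNz] at h1
    have h9 : (3:ℤ)^(w+2) = 9 * 3^w := by ring
    have := Int.le_of_dvd (by omega) h1
    omega
  have f9 : e - 2*k ≠ 0 := by
    intro h0
    have h1 : ((3^(w+2) - 2*a : ℤ) : ZMod (2*3^(w+2))) = 0 := by
      push_cast
      rw [hka, ← he]
      linear_combination h0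
    rw [hNz] at h1
    have h2 : (2:ℤ) ∣ (3^(w+2) - 2*a) := dvd_trans ⟨3^(w+2), by ring⟩ h1
    have := not_two_dvd_pow3 (w+2)
    omega
  -- sequence values
  have c3' : cheb k 3 = k * cheb k 2 - cheb k 1 := cheb_add_two k 1
  have c4' : cheb k 4 = k * cheb k 3 - cheb k 2 := cheb_add_two k 2
  have c5' : cheb k 5 = k * cheb k 4 - cheb k 3 := cheb_add_two k 3
  have c6' : cheb k 6 = k * cheb k 5 - cheb k 4 := cheb_add_two k 4
  have g3 : cheb k 3 = e - 1 := by
    rw [c3', cheb_two, cheb_one]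
    linear_combination f1
  have g4 : cheb k 4 = e - 2*k := by
    rw [c4', g3, cheb_two]
    linear_combination f4
  have g5 : cheb k 5 = 1 := by
    rw [c5', g4, g3]
    linear_combination f4 - 2*f1 - f2
  have g6 : cheb k 6 = 0 := by
    rw [c6', g5, g4]
    linear_combination f7
  have hn : monomialSize (2*3^(w+2)) k = 6 := by
    apply msize_eq hm1 k (by norm_num) g6
    intro i' hi1 hi2
    interval_cases i'
    · simp
    · rw [cheb_two]; exact hk0
    · rw [g3]
      intro h; exact f6 (by linear_combination h)
    · rw [g4]; exact f9
    · rw [g5]; exact one_ne_zero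
  apply (irreducible_iff_witness hm1 k hk0).mpr
  rintro j hj2 hjn ⟨h1, h2⟩
  rw [hn] at hjn
  have hj4 : j ≤ 4 := by omega
  interval_cases j
  · rw [cheb_two] at h1
    exact f6 (by linear_combination h1 - f1)
  · rw [g3] at h1
    exact f5 (by linear_combination h1 - f3 + f2)
  · rw [g4] at h1
    exact f6 (by linear_combination h1 - f3 + 4*f4 - 4*f1)
end casesC
section caseB1
variable {m : ℕ}

lemma caseB1 (w : ℕ) (k : ZMod (2*3^(w+2))) (ha3 : 3^(w+1) ∣ k.val)
    (haeven : 2 ∣ k.val) (hk0 : k ≠ 0) : ¬ IsIrreducibleE (monoSol (2*3^(w+2)) k) := by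
  haveI : NeZero (2*3^(w+2)) := ⟨by positivity⟩
  haveI : Fact (1 < 2*3^(w+2)) := ⟨by have := Nat.one_le_pow (w+2) 3 (by norm_num); omega⟩
  have hm1 : 1 ≤ w + 2 := by omega
  set a : ℤ := (k.val : ℤ) with hadef
  obtain ⟨t, ht⟩ : 2*3^(w+1) ∣ k.val :=
    (Nat.Coprime.pow_right _ (by norm_num : Nat.Coprime 2 3)).mul_dvd_of_dvd_of_dvd haeven ha3
  have hka : ((a:ℤ) : ZMod (2*3^(w+2))) = k := by
    rw [hadef]; push_cast; exact ZMod.natCast_rightInverse k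
  have hcast : ∀ i, cheb k i = ((cheb a i : ℤ) : ZMod (2*3^(w+2))) := by
    intro i; rw [← hka]; exact (cheb_int_cast _ a i).symm
  have hNc : ((2*3^(w+2) : ℕ):ℤ) = (2*3^(w+2):ℤ) := by push_cast; ring
  have hNz : ∀ x : ℤ, ((x:ℤ) : ZMod (2*3^(w+2))) = 0 ↔ (2*3^(w+2):ℤ) ∣ x := by
    intro x; rw [ZMod.intCast_zmod_eq_zero_iff_dvd, hNc]
  have haZ : a = 2*3^(w+1) * (t:ℤ) := by rw [hadef, ht]; push_cast; ring
  have zk2 : k * k = 0 := by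
    have h0 : ((a*a : ℤ) : ZMod (2*3^(w+2))) = 0 := by
      rw [hNz]
      exact ⟨2*3^w*(t:ℤ)*(t:ℤ), by rw [haZ]; ring⟩
    push_cast at h0
    rw [hka] at h0
    exact h0
  have z3k : 3 * k = 0 := by
    have h0 : ((3*a : ℤ) : ZMod (2*3^(w+2))) = 0 := by
      rw [hNz]
      exact ⟨(t:ℤ), by rw [haZ]; ring⟩
    push_cast at h0
    rw [hka] at h0
    exact h0
  have z2k : 2 * k ≠ 0 := by
    intro h0
    have h1 : ((2*a : ℤ) : ZMod (2*3^(w+2))) = 0 := by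
      push_cast
      rw [hka]
      exact h0
    rw [hNz] at h1
    have h2 : ((2*3^(w+2) : ℕ):ℤ) ∣ ((2*k.val : ℕ):ℤ) := by
      rw [hNc]; push_cast; exact h1
    have h3 : (2*3^(w+2) : ℕ) ∣ 2*k.val := Int.natCast_dvd_natCast.mp h2
    have h4 : 3^(w+2) ∣ k.val := (Nat.mul_dvd_mul_iff_left (by norm_num : 0 < 2)).mp h3
    obtain ⟨s, hs⟩ := h4
    have hlt : k.val < 2*3^(w+2) := ZMod.val_lt k
    have hne : k.val ≠ 0 := fun h => hk0 ((ZMod.val_eq_zero k).mp h)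
    have hodd : Odd (3^(w+2)) := (by decide : Odd 3).pow
    obtain ⟨r, hr⟩ := hodd
    have hp : 0 < 3^(w+2) := by positivity
    obtain ⟨q, hq⟩ := haeven
    rcases Nat.lt_or_ge s 2 with hs2 | hs2
    · interval_cases s <;> omega
    · have := Nat.mul_le_mul_left (3^(w+2)) hs2
      omega
  have c3' : cheb k 3 = k * cheb k 2 - cheb k 1 := cheb_add_two k 1
  have c4' : cheb k 4 = k * cheb k 3 - cheb k 2 := cheb_add_two k 2
  have c5' : cheb k 5 = k * cheb k 4 - cheb k 3 := cheb_add_two k 3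
  have c6' : cheb k 6 = k * cheb k 5 - cheb k 4 := cheb_add_two k 4
  have g3 : cheb k 3 = -1 := by
    rw [c3', cheb_two, cheb_one]
    linear_combination zk2
  have g4 : cheb k 4 = -(2*k) := by
    rw [c4', g3, cheb_two]
    ring
  have g5 : cheb k 5 = 1 := by
    rw [c5', g4, g3]
    linear_combination -2*zk2
  have g6 : cheb k 6 = 0 := by
    rw [c6', g5, g4]
    linear_combination z3k
  have hn : monomialSize (2*3^(w+2)) k = 6 := by
    apply msize_eq hm1 k (by norm_num) g6
    intro i' hi1 hi2
    interval_cases i'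
    · simp
    · rw [cheb_two]; exact hk0
    · rw [g3]; simp
    · rw [g4]; intro h; exact z2k (by linear_combination -h)
    · rw [g5]; exact one_ne_zero
  intro hirr
  have hw := (irreducible_iff_witness hm1 k hk0).mp hirr 3 (by norm_num) (by rw [hn]; norm_num)
  apply hw
  constructor
  · rw [g3]; ring
  · rw [g4, g3]
    linear_combination 2*zk2
end caseB1
section caseB2

lemma caseB2 (w : ℕ) (k : ZMod (2*3^(w+2))) (h3 : 3 ∣ k.val)
    (hn3 : ¬ 3^(w+1) ∣ k.val) : ¬ IsIrreducibleE (monoSol (2*3^(w+2)) k) := by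
  haveI : NeZero (2*3^(w+2)) := ⟨by positivity⟩
  haveI : Fact (1 < 2*3^(w+2)) := ⟨by have := Nat.one_le_pow (w+2) 3 (by norm_num); omega⟩
  have hm1 : 1 ≤ w + 2 := by omega
  have hvne : k.val ≠ 0 := fun h => hn3 (by rw [h]; exact dvd_zero _)
  have hk0 : k ≠ 0 := fun h => hvne ((ZMod.val_eq_zero k).mpr h)
  -- 3-adic valuation of k.val
  have hfac := Nat.ordProj_mul_ordCompl_eq_self k.val 3
  have hu3' : ¬ 3 ∣ k.val / 3^((k.val).factorization 3) :=
    Nat.not_dvd_ordCompl (by norm_num) hvne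
  have hv1 : 1 ≤ (k.val).factorization 3 := by
    rw [← (Nat.Prime.pow_dvd_iff_le_factorization (by norm_num) hvne : 3^1 ∣ k.val ↔ _)]
    simpa using h3
  have hvw : (k.val).factorization 3 ≤ w := by
    by_contra h
    exact hn3 (((Nat.Prime.pow_dvd_iff_le_factorization (by norm_num) hvne).mpr (by omega)))
  obtain ⟨v', hv'⟩ : ∃ v', (k.val).factorization 3 = v' + 1 :=
    ⟨(k.val).factorization 3 - 1, by omega⟩
  rw [hv'] at hfac hu3'
  set u : ℕ := k.val / 3^(v'+1) with hudef
  have hu3 : ¬ 3 ∣ u := hu3'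
  have hval : k.val = 3^(v'+1) * u := hfac.symm
  have hvw' : v' + 1 ≤ w := by omega
  -- integer setup
  set a : ℤ := (k.val : ℤ) with hadef
  have hka : ((a:ℤ) : ZMod (2*3^(w+2))) = k := by
    rw [hadef]; push_cast; exact ZMod.natCast_rightInverse k
  have hcast : ∀ i, cheb k i = ((cheb a i : ℤ) : ZMod (2*3^(w+2))) := by
    intro i; rw [← hka]; exact (cheb_int_cast _ a i).symm
  have hNc : ((2*3^(w+2) : ℕ):ℤ) = (2*3^(w+2):ℤ) := by push_cast; ring
  have hNz : ∀ x : ℤ, ((x:ℤ) : ZMod (2*3^(w+2))) = 0 ↔ (2*3^(w+2):ℤ) ∣ x := by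
    intro x; rw [ZMod.intCast_zmod_eq_zero_iff_dvd, hNc]
  have hu3Z : ¬ (3:ℤ) ∣ (u:ℤ) := fun h => hu3 (by exact_mod_cast h)
  have haZ : a = 3^(v'+1) * (u:ℤ) := by
    rw [hadef]
    conv_lhs => rw [hval]
    push_cast
    ring
  have ha3Z : (3:ℤ) ∣ a := by
    rw [haZ]
    exact Dvd.dvd.mul_right (dvd_pow_self 3 (by omega)) _
  have D := Delta hu3Z haZ
  set T := w - v' with hTdef
  have hT1 : 1 ≤ T := by omega
  have hp3T : 1 ≤ 3^T := Nat.one_le_pow _ 3 (by norm_num)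
  -- W = cheb a (2*3^T)
  obtain ⟨g, hgW, hg3⟩ := D T 1 (by norm_num)
  have hgW' : cheb a (2*3^T) = 3^(w+1) * g := by
    rw [show 2*3^T = 2*(3^T*1) by ring] at *
    rw [hgW, show v'+1+T = w+1 by omega]
  -- X2 = cheb a (2*3^T+2)
  have h3T : 3 ∣ 3^T := dvd_pow_self 3 (by omega)
  obtain ⟨g2, hgX, hg23⟩ := D 0 (3^T+1) (by omega)
  have hgX' : cheb a (2*3^T+2) = 3^(v'+1) * g2 := by
    rw [show 2*(3^0*(3^T+1)) = 2*3^T+2 by simp; ring] at hgX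
    rw [hgX]
  -- Y and its value -1 mod N
  set Y := cheb a (2*3^T+1) with hY
  have hdet := cheb_det a (2*3^T)
  have hYsq : Y*Y - 1 = 3^(v'+1)*g2*(3^(w+1)*g) := by
    rw [← hgX', ← hgW']
    linear_combination hdet
  have hoddT : Odd (3^T) := (by decide : Odd 3).pow
  have hsign : (3:ℤ) ∣ Y + 1 := by
    have hs := dvd3_cheb_odd_sign ha3Z (3^T)
    rw [Odd.neg_one_pow hoddT] at hs
    rw [hY]
    omega
  have hnd : ¬ (3:ℤ) ∣ Y - 1 := by omega
  have h3mY : (3:ℤ)^(w+2) ∣ (Y-1)*(Y+1) := by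
    rw [show (Y-1)*(Y+1) = Y*Y - 1 by ring, hYsq]
    exact ⟨3^v'*g2*g, by ring⟩
  have h3mY1 : (3:ℤ)^(w+2) ∣ Y + 1 :=
    Int.prime_three.pow_dvd_of_dvd_mul_left _ hnd h3mY
  have h2Y1 : (2:ℤ) ∣ Y + 1 := by
    rw [hY]
    by_cases hpa : (2:ℤ) ∣ a
    · have := dvd2_cheb_even hpa (2*3^T+1)
      omega
    · have h1 := dvd2_cheb_odd hpa (2*3^T+1)
      have h2 : ¬ 3 ∣ (2*3^T+1) := by omega
      have := h1
      omega
  have hNY : (2*3^(w+2):ℤ) ∣ Y + 1 := cop23m.mul_dvd h2Y1 h3mY1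
  have hcj : cheb k (2*3^T+1) = -1 := by
    have h0 : ((Y + 1 : ℤ) : ZMod (2*3^(w+2))) = 0 := (hNz _).mpr hNY
    push_cast at h0
    rw [hY] at h0
    rw [← hcast] at h0
    linear_combination h0
  -- W facts
  have hWeven : (2:ℤ) ∣ cheb a (2*3^T) := by
    by_cases hpa : (2:ℤ) ∣ a
    · exact (dvd2_cheb_even hpa (2*3^T)).mpr ⟨3^T, rfl⟩
    · exact (dvd2_cheb_odd hpa (2*3^T)).mpr (by omega)
  have hkW : (2*3^(w+2):ℤ) ∣ a * cheb a (2*3^T) := by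
    apply cop23m.mul_dvd
    · exact Dvd.dvd.mul_left hWeven a
    · rw [hgW', haZ]
      exact ⟨3^v'*(u:ℤ)*g, by ring⟩
  have hW2 : (2*3^(w+2):ℤ) ∣ cheb a (2*3^T) * cheb a (2*3^T) := by
    apply cop23m.mul_dvd
    · exact Dvd.dvd.mul_right hWeven _
    · rw [hgW']
      exact ⟨3^w*g*g, by ring⟩
  have zkw : k * cheb k (2*3^T) = 0 := by
    have h0 := (hNz _).mpr hkW
    push_cast at h0
    rw [hka, ← hcast] at h0
    exact h0
  have zw2 : cheb k (2*3^T) * cheb k (2*3^T) = 0 := by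
    have h0 := (hNz _).mpr hW2
    push_cast at h0
    rw [← hcast] at h0
    exact h0
  -- nonvanishing up to 2*3^T+2
  have hmin : ∀ i, 0 < i → i ≤ 2*3^T+2 → cheb k i ≠ 0 := by
    intro i hi0 hile hz
    have hdvd : (2*3^(w+2):ℤ) ∣ cheb a i := by
      rw [← hNz, ← hcast]
      exact hz
    have h3dvd : (3:ℤ)^(w+2) ∣ cheb a i := dvd_trans (dvd_mul_left _ 2) hdvd
    rcases Nat.even_or_odd i with he | ho
    · obtain ⟨c, hc⟩ := he
      have hc' : i = 2*c := by omega
      have hcpos : 0 < c := by omega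
      obtain ⟨E, c₀, hcE, hc₀⟩ := three_adic c hcpos
      have hc₀pos : 0 < c₀ := by
        rcases Nat.eq_zero_or_pos c₀ with h | h
        · rw [h, Nat.mul_zero] at hcE; omega
        · exact h
      have hET : E < T + 1 := by
        by_contra hE
        have h1 : 3^(T+1) ≤ 3^E := Nat.pow_le_pow_right (by norm_num) (by omega)
        have h2 : 3^E ≤ 3^E * c₀ := Nat.le_mul_of_pos_right _ hc₀pos
        have h3' : (3:ℕ)^(T+1) = 3*3^T := by ring
        omega
      obtain ⟨g₃, hg₃, hg₃3⟩ := D E c₀ hc₀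
      rw [← hcE, ← hc'] at hg₃
      rw [hg₃] at h3dvd
      have hsle : v'+1+E ≤ w+1 := by omega
      rw [show w+2 = (v'+1+E) + (w+2-(v'+1+E)) by omega, pow_add] at h3dvd
      have := (mul_dvd_mul_iff_left (pow_ne_zero (v'+1+E) (by norm_num : (3:ℤ) ≠ 0))).mp h3dvd
      exact hg₃3 (dvd_trans (dvd_pow_self 3 (by omega)) this)
    · obtain ⟨c, hc⟩ := ho
      have := not_dvd3_cheb_odd ha3Z c
      rw [← hc] at this
      exact this (dvd_trans (dvd_pow_self 3 (by omega)) h3dvd)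
  have hn_lb : 2*3^T+3 ≤ monomialSize (2*3^(w+2)) k := by
    by_contra h
    obtain ⟨hpos, hzero⟩ := msize_mem hm1 k
    exact hmin _ hpos (by omega) hzero
  -- conclude reducibility
  intro hirr
  have hwit := (irreducible_iff_witness hm1 k hk0).mp hirr (2*3^T+1) (by omega) (by omega)
  apply hwit
  have hrec : cheb k (2*3^T+2) = k * cheb k (2*3^T+1) - cheb k (2*3^T) :=
    cheb_add_two k (2*3^T)
  constructor
  · rw [hcj]; ring
  · show cheb k (2*3^T+2) * (k - cheb k (2*3^T+1) * cheb k (2*3^T+2)) = 0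
    rw [hrec, hcj]
    linear_combination zkw + zw2
end caseB2
section finale

lemma charac (w : ℕ) (k : ZMod (2*3^(w+2))) :
    IsIrreducibleE (monoSol (2*3^(w+2)) k) ↔
      (¬ 3 ∣ k.val ∨ (¬ 2 ∣ k.val ∧ 3^(w+1) ∣ k.val ∧ k.val ≠ 0)) := by
  haveI : NeZero (2*3^(w+2)) := ⟨by positivity⟩
  constructor
  · intro hirr
    by_contra hR
    push_neg at hR
    obtain ⟨h3, h2⟩ := hR
    by_cases hz : k.val = 0
    · have hk : k = 0 := (ZMod.val_eq_zero k).mp hz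
      rw [hk] at hirr
      exact not_irr_zero (by omega) hirr
    · by_cases hdv : 3^(w+1) ∣ k.val
      · by_cases h2v : 2 ∣ k.val
        · exact caseB1 w k hdv h2v (fun h => hz ((ZMod.val_eq_zero k).mpr h)) hirr
        · exact absurd (h2 h2v hdv) (by simpa using hz)
      · exact caseB2 w k h3 hdv hirr
  · intro h
    rcases h with h | ⟨hodd, hdvd, hne⟩
    · apply caseA (by omega) k
      intro hc
      exact h (by exact_mod_cast hc)
    · exact caseC w k hdvd hodd (fun hc => hne ((ZMod.val_eq_zero k).mpr hc))

lemma count_mult : ∀ M, ((Finset.range (3*M)).filter (fun n => 3 ∣ n)).card = M := by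
  intro M
  induction M with
  | zero => simp
  | succ M ih =>
    rw [show 3*(M+1) = (3*M+1+1)+1 by ring, Finset.range_add_one, Finset.filter_insert,
      Finset.range_add_one, Finset.filter_insert, Finset.range_add_one, Finset.filter_insert]
    rw [if_neg (by omega), if_neg (by omega), if_pos (by omega)]
    rw [Finset.card_insert_of_notMem (by simp)]
    rw [ih]

lemma count_triple (w : ℕ) :
    ((Finset.range (2*3^(w+2))).filter
      (fun n => ¬ 2 ∣ n ∧ 3^(w+1) ∣ n ∧ n ≠ 0)).card = 3 := by
  have hp : 0 < 3^(w+1) := by positivity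
  have hodd : ¬ 2 ∣ 3^(w+1) := by
    obtain ⟨r, hr⟩ := (by decide : Odd 3).pow (n := w+1)
    omega
  have hN : 2*3^(w+2) = 6*3^(w+1) := by ring
  have hset : ((Finset.range (2*3^(w+2))).filter
      (fun n => ¬ 2 ∣ n ∧ 3^(w+1) ∣ n ∧ n ≠ 0)) =
      {3^(w+1), 3^(w+2), 5*3^(w+1)} := by
    ext n
    simp only [Finset.mem_filter, Finset.mem_range, Finset.mem_insert, Finset.mem_singleton]
    constructor
    · rintro ⟨hlt, hn2, ⟨d, hd⟩, hne⟩
      have hd6 : d < 6 := by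
        apply Nat.lt_of_mul_lt_mul_left (a := 3^(w+1))
        omega
      have hdodd : ¬ 2 ∣ d := by
        rintro ⟨s, hs⟩
        exact hn2 ⟨3^(w+1)*s, by rw [hd, hs]; ring⟩
      have hdne : d ≠ 0 := by rintro rfl; simp at hd; exact hne hd
      have h32 : (3:ℕ)^(w+2) = 3^(w+1)*3 := by ring
      rcases (by omega : d = 1 ∨ d = 3 ∨ d = 5) with rfl | rfl | rfl
      · left; omega
      · right; left; omega
      · right; right; omega
    · intro h
      have h32 : (3:ℕ)^(w+2) = 3^(w+1)*3 := by ring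
      rcases h with rfl | h | h
      · exact ⟨by omega, hodd, ⟨1, by ring⟩, by omega⟩
      · refine ⟨by omega, ?_, ⟨3, by omega⟩, by omega⟩
        intro ⟨s, hs⟩
        exact hodd ⟨s - 3^(w+1), by omega⟩
      · refine ⟨by omega, ?_, ⟨5, by omega⟩, by omega⟩
        intro ⟨s, hs⟩
        exact hodd ⟨s - 2*3^(w+1), by omega⟩
  rw [hset]
  have h32 : (3:ℕ)^(w+2) = 3^(w+1)*3 := by ring
  have d1 : (3:ℕ)^(w+1) ≠ 3^(w+2) := by omega
  have d2 : (3:ℕ)^(w+1) ≠ 5*3^(w+1) := by omega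
  have d3 : (3:ℕ)^(w+2) ≠ 5*3^(w+1) := by omega
  rw [Finset.card_insert_of_notMem (by simp [d1, d2]),
    Finset.card_insert_of_notMem (by simp [d3]), Finset.card_singleton]
end finale

/-- for `N = 2·3^m` with `m ≥ 2`, the number of `k ∈ ZMod N` whose
`k`-monomial minimal solution of `(E_N)` is irreducible equals `4·3^(m-1) + 3`. -/
theorem stmt_3 (m : ℕ) (hm : 2 ≤ m) :
    Nat.card {k : ZMod (2 * 3 ^ m) // IsIrreducibleE (monoSol (2 * 3 ^ m) k)} =
      4 * 3 ^ (m - 1) + 3 := by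
  obtain ⟨w, rfl⟩ : ∃ w, m = w + 2 := ⟨m - 2, by omega⟩
  haveI : NeZero (2*3^(w+2)) := ⟨by positivity⟩
  classical
  rw [Nat.card_eq_fintype_card, Fintype.card_subtype]
  have hset : (Finset.univ.filter
      (fun k : ZMod (2*3^(w+2)) => IsIrreducibleE (monoSol (2*3^(w+2)) k))) =
      (Finset.univ.filter (fun k : ZMod (2*3^(w+2)) =>
        ¬ 3 ∣ k.val ∨ (¬ 2 ∣ k.val ∧ 3^(w+1) ∣ k.val ∧ k.val ≠ 0))) := by
    ext k
    simp only [Finset.mem_filter, Finset.mem_univ, true_and]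
    exact charac w k
  rw [hset]
  have hbij : (Finset.univ.filter (fun k : ZMod (2*3^(w+2)) =>
        ¬ 3 ∣ k.val ∨ (¬ 2 ∣ k.val ∧ 3^(w+1) ∣ k.val ∧ k.val ≠ 0))).card =
      ((Finset.range (2*3^(w+2))).filter (fun n =>
        ¬ 3 ∣ n ∨ (¬ 2 ∣ n ∧ 3^(w+1) ∣ n ∧ n ≠ 0))).card := by
    refine Finset.card_nbij' (fun k => k.val) (fun n => (n : ZMod (2*3^(w+2)))) ?_ ?_ ?_ ?_
    · intro k hk
      simp only [Finset.mem_coe, Finset.mem_filter, Finset.mem_univ, true_and] at hk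
      simp only [Finset.mem_coe, Finset.mem_filter, Finset.mem_range]
      exact ⟨ZMod.val_lt k, hk⟩
    · intro n hn
      simp only [Finset.mem_coe, Finset.mem_filter, Finset.mem_range] at hn
      simp only [Finset.mem_coe, Finset.mem_filter, Finset.mem_univ, true_and]
      rw [ZMod.val_cast_of_lt hn.1]
      exact hn.2
    · intro k _
      exact ZMod.natCast_rightInverse k
    · intro n hn
      simp only [Finset.mem_coe, Finset.mem_filter, Finset.mem_range] at hn
      exact ZMod.val_cast_of_lt hn.1
  rw [hbij]
  rw [Finset.filter_or, Finset.card_union_of_disjoint]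
  · rw [count_triple]
    have hc1 : ((Finset.range (2*3^(w+2))).filter (fun n => ¬ 3 ∣ n)).card =
        2*3^(w+2) - 2*3^(w+1) := by
      rw [Finset.filter_not, Finset.card_sdiff_of_subset (Finset.filter_subset _ _)]
      rw [Finset.card_range]
      rw [show 2*3^(w+2) = 3*(2*3^(w+1)) by ring] at *
      rw [count_mult]
    rw [hc1]
    have h32 : (3:ℕ)^(w+2) = 3^(w+1)*3 := by ring
    have hp : 0 < 3^(w+1) := by positivity
    have hm1 : w + 2 - 1 = w + 1 := rfl
    rw [hm1]
    omega
  · rw [Finset.disjoint_filter]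
    intro n _ hn3 hcon
    obtain ⟨-, hdvd, hne⟩ := hcon
    apply hn3
    exact dvd_trans (dvd_pow_self 3 (by omega)) hdvd
end

section
/- Let p be an odd prime, n ≥ 1 an integer, N = p^n, and k an integer. The (k mod N)-monomial minimal solution of (E_N) is irreducible if and only if p does not divide k. Consequently, the number of elements k ∈ Z/NZ for which the k-monomial minimal solution of (E_N) is irreducible equals φ(p^n) = p^{n−1}(p−1), where φ is Euler's totient function. -/
open Matrix

/- ========== auxiliary development ========== -/
namespace Stmt10

open Matrix Finset

variable {N : ℕ}

/-- continuant-type sequence: `Vs k j` is the `(1,0)` entry of `(genMat k)^j`. -/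
def Vs (k : ZMod N) : ℕ → ZMod N
  | 0 => 0
  | 1 => 1
  | (j+2) => k * Vs k (j+1) - Vs k j

def Ws (k : ZMod N) : ℕ → ZMod N
  | 0 => 1
  | 1 => 0
  | (j+2) => k * Ws k (j+1) - Ws k j

@[simp] lemma Vs_zero (k : ZMod N) : Vs k 0 = 0 := rfl
@[simp] lemma Vs_one (k : ZMod N) : Vs k 1 = 1 := rfl
@[simp] lemma Ws_zero (k : ZMod N) : Ws k 0 = 1 := rfl
@[simp] lemma Ws_one (k : ZMod N) : Ws k 1 = 0 := rfl
lemma Vs_rec (k : ZMod N) (j : ℕ) : Vs k (j+2) = k * Vs k (j+1) - Vs k j := rfl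
lemma Ws_rec (k : ZMod N) (j : ℕ) : Ws k (j+2) = k * Ws k (j+1) - Ws k j := rfl

lemma Ws_eq_neg_Vs (k : ZMod N) : ∀ j, Ws k (j+1) = - Vs k j := by
  intro j
  induction j using Nat.twoStepInduction with
  | zero => simp
  | one => simp [Ws_rec, Vs_one]
  | more j ih1 ih2 =>
    rw [show j + 2 + 1 = (j+1) + 2 by ring, Ws_rec, Vs_rec, ih1, ih2]; ring

lemma Vs_succ (k : ZMod N) (j : ℕ) : Vs k (j+1) = k * Vs k j + Ws k j := by
  cases j with
  | zero => simp
  | succ j => rw [Vs_rec, Ws_eq_neg_Vs]; ring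

lemma Vs_hom {M : ℕ} (f : ZMod N →+* ZMod M) (k : ZMod N) (j : ℕ) :
    f (Vs k j) = Vs (f k) j := by
  induction j using Nat.twoStepInduction with
  | zero => simp
  | one => simp
  | more j ih1 ih2 => rw [Vs_rec, Vs_rec, map_sub, _root_.map_mul, ih1, ih2]

lemma Vs_zero_param (M r : ℕ) : Vs (0 : ZMod M) (2*r+1) = (-1)^r := by
  induction r with
  | zero => simp
  | succ r ih =>
    rw [show 2*(r+1)+1 = (2*r+1) + 2 by ring, Vs_rec, zero_mul, zero_sub, ih, pow_succ]
    ring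

lemma genMat_sq (k : ZMod N) : genMat k ^ 2 = k • genMat k - 1 := by
  rw [pow_two, genMat]
  ext i j
  fin_cases i <;> fin_cases j <;>
    simp [Matrix.mul_apply, Fin.sum_univ_succ, Matrix.one_apply] <;> ring

lemma pow_rep {k : ZMod N} (X : Matrix (Fin 2) (Fin 2) (ZMod N))
    (hX : X ^ 2 = k • X - 1) : ∀ j, X ^ j = Vs k j • X + Ws k j • 1 := by
  intro j
  induction j with
  | zero => simp
  | succ j ih =>
    rw [pow_succ, ih, add_mul, smul_mul_assoc, smul_mul_assoc, one_mul, ← pow_two, hX,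
      Vs_succ, Ws_eq_neg_Vs]
    rw [smul_sub, smul_smul]
    module

lemma genMat_pow_apply10 (k : ZMod N) (j : ℕ) : (genMat k ^ j) 1 0 = Vs k j := by
  rw [pow_rep (genMat k) (genMat_sq k) j]
  simp [Matrix.add_apply, Matrix.one_apply, genMat]

lemma genMat_pow_apply11 (k : ZMod N) (j : ℕ) : (genMat k ^ j) 1 1 = Ws k j := by
  rw [pow_rep (genMat k) (genMat_sq k) j]
  simp [Matrix.add_apply, Matrix.one_apply, genMat]

lemma genMat_pow_apply00 (k : ZMod N) (j : ℕ) : (genMat k ^ j) 0 0 = Vs k (j+1) := by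
  rw [pow_rep (genMat k) (genMat_sq k) j, Vs_succ]
  simp [Matrix.add_apply, Matrix.one_apply, genMat]
  ring

lemma genMat_pow_apply01 (k : ZMod N) (j : ℕ) : (genMat k ^ j) 0 1 = - Vs k j := by
  rw [pow_rep (genMat k) (genMat_sq k) j]
  simp [Matrix.add_apply, Matrix.one_apply, genMat]

@[simp] lemma det_genMat (k : ZMod N) : (genMat k).det = 1 := by
  rw [genMat, det_fin_two_of]; ring

lemma det_identity (k : ZMod N) (j : ℕ) :
    Vs k (j+1) * Ws k j + Vs k j ^ 2 = 1 := by
  have h : (genMat k ^ j).det = 1 := by rw [det_pow, det_genMat, one_pow]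
  rw [Matrix.det_fin_two, genMat_pow_apply00, genMat_pow_apply01, genMat_pow_apply10,
    genMat_pow_apply11] at h
  rw [← h]; ring

/- ===== Mword lemmas ===== -/

lemma Mword_replicate (k : ZMod N) (m : ℕ) :
    Mword (List.replicate m k) = genMat k ^ m := by
  simp [Mword, List.reverse_replicate, List.map_replicate, List.prod_replicate]

lemma Mword_sandwich (k x y : ZMod N) (i : ℕ) :
    Mword (x :: (List.replicate i k ++ [y])) = genMat y * genMat k ^ i * genMat x := by
  simp [Mword, List.reverse_cons, List.reverse_append, List.reverse_replicate,
    List.map_append, List.map_replicate, List.prod_append, List.prod_replicate, mul_assoc]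

/- ===== pairing lemma ===== -/

lemma abar_mul (k : ZMod N) : genMat k * (k • 1 - genMat k) = 1 := by
  rw [mul_sub, mul_smul_comm, mul_one, ← pow_two, genMat_sq]
  abel

lemma abar_sq (k : ZMod N) :
    (k • 1 - genMat k)^2 = k • (k • 1 - genMat k) - 1 := by
  rw [pow_two, sub_mul, smul_mul_assoc, one_mul, abar_mul]

lemma abar_comm (k : ZMod N) : Commute (genMat k) (k • 1 - genMat k) := by
  unfold Commute SemiconjBy
  rw [mul_sub, sub_mul, mul_smul_comm, smul_mul_assoc, mul_one, one_mul]

lemma V_pair (k : ZMod N) {x y M : ℕ} (h : x + y = M) (h0 : Vs k M = 0) :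
    Vs k x = -(Ws k M) * Vs k y := by
  set A := genMat k with hA
  set B := (k • 1 - genMat k : Matrix (Fin 2) (Fin 2) (ZMod N)) with hB
  have hM : A ^ M = Ws k M • 1 := by
    rw [pow_rep A (genMat_sq k) M, h0, zero_smul, zero_add]
  have hx : A ^ x = Ws k M • B ^ y := by
    have h1 : (A * B) ^ y = 1 := by rw [abar_mul k, one_pow]
    calc A ^ x = A ^ x * ((A * B) ^ y) := by rw [h1, mul_one]
    _ = A ^ x * (A ^ y * B ^ y) := by rw [(abar_comm k).mul_pow]
    _ = (A ^ (x + y)) * B ^ y := by rw [← mul_assoc, ← pow_add]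
    _ = (Ws k M • 1) * B ^ y := by rw [h, hM]
    _ = Ws k M • B ^ y := by rw [smul_mul_assoc, one_mul]
  have h10 := congrArg (fun M : Matrix (Fin 2) (Fin 2) (ZMod N) => M 1 0) hx
  simp only [Matrix.smul_apply, smul_eq_mul] at h10
  rw [genMat_pow_apply10] at h10
  rw [pow_rep B (abar_sq k) y] at h10
  have : (Vs k y • B + Ws k y • 1) 1 0 = -(Vs k y) := by
    simp [hB, Matrix.add_apply, Matrix.smul_apply, Matrix.sub_apply, Matrix.one_apply, genMat]
  rw [this] at h10
  rw [h10]; ring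

/- ===== solutions ===== -/

lemma isSolution_replicate_iff' (k : ZMod N) (m : ℕ) :
    IsSolutionE (List.replicate m k) ↔ (genMat k ^ m = 1 ∨ genMat k ^ m = -1) := by
  rw [IsSolutionE, Mword_replicate]

lemma V_eq_zero_of_solution {k : ZMod N} {m : ℕ}
    (h : IsSolutionE (List.replicate m k)) : Vs k m = 0 := by
  rcases (isSolution_replicate_iff' k m).mp h with h | h <;>
  · have := congrArg (fun M : Matrix (Fin 2) (Fin 2) (ZMod N) => M 1 0) h
    rw [genMat_pow_apply10] at this
    rw [this]
    simp [Matrix.one_apply, Matrix.neg_apply]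

lemma ws_sq_of_V_zero {k : ZMod N} {m : ℕ} (h : Vs k m = 0) :
    genMat k ^ m = Ws k m • 1 ∧ (Ws k m)^2 = 1 := by
  have h1 : genMat k ^ m = Ws k m • 1 := by
    rw [pow_rep (genMat k) (genMat_sq k) m, h, zero_smul, zero_add]
  refine ⟨h1, ?_⟩
  have hd : (genMat k ^ m).det = 1 := by rw [det_pow, det_genMat, one_pow]
  rw [h1, det_smul, det_one, mul_one, Fintype.card_fin] at hd
  exact hd

lemma Ws_sq {k : ZMod N} {m : ℕ} (h : Vs k m = 0) : (Ws k m)^2 = 1 :=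
  (ws_sq_of_V_zero h).2

lemma setS_nonempty [NeZero N] (k : ZMod N) :
    {m : ℕ | 0 < m ∧ IsSolutionE (List.replicate m k)}.Nonempty := by
  have hA : IsUnit (genMat k) := by
    apply (Matrix.isUnit_iff_isUnit_det _).mpr
    rw [det_genMat]; exact isUnit_one
  obtain ⟨u, hu⟩ := hA
  refine ⟨orderOf u, orderOf_pos u, Or.inl ?_⟩
  rw [Mword_replicate, ← hu, ← Units.val_pow_eq_pow_val, pow_orderOf_eq_one, Units.val_one]

lemma monoSize_le (k : ZMod N) {m : ℕ} (hm : 0 < m)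
    (h : IsSolutionE (List.replicate m k)) : monomialSize N k ≤ m := by
  unfold monomialSize
  exact Nat.sInf_le ⟨hm, h⟩

lemma monoSize_mem [NeZero N] (k : ZMod N) :
    0 < monomialSize N k ∧ IsSolutionE (List.replicate (monomialSize N k) k) := by
  have := Nat.sInf_mem (setS_nonempty k)
  exact this

/- ===== binomial sums ===== -/

lemma pow_two_mul_eq (k : ZMod N) (t : ℕ) :
    (genMat k)^(2*t) = ((-1:ZMod N)^t) •
      ∑ j ∈ range (t+1), ((-k)^j * (t.choose j : ZMod N)) • (genMat k)^j := by
  have hneg : ((k • genMat k - 1) : Matrix (Fin 2) (Fin 2) (ZMod N))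
      = -(((-k) • genMat k) + 1) := by rw [neg_smul]; abel
  have hc : Commute ((-k) • genMat k) (1 : Matrix (Fin 2) (Fin 2) (ZMod N)) :=
    Commute.one_right _
  rw [pow_mul, genMat_sq, hneg, neg_pow,
    show (-1 : Matrix (Fin 2) (Fin 2) (ZMod N)) = (-1 : ZMod N) • 1 by simp,
    smul_pow, smul_mul_assoc, one_pow, one_mul, hc.add_pow]
  congr 1
  refine Finset.sum_congr rfl (fun j hj => ?_)
  rw [one_pow, mul_one, smul_pow, (Nat.commute_cast _ (t.choose j)).eq]
  rw [show ((t.choose j : ℕ) : Matrix (Fin 2) (Fin 2) (ZMod N)) * ((-k)^j • genMat k ^ j)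
      = (t.choose j : ZMod N) • ((-k)^j • genMat k ^ j) by
    simp [Nat.cast_smul_eq_nsmul]]
  rw [smul_smul, mul_comm]

lemma V_two_mul (k : ZMod N) (t : ℕ) :
    Vs k (2*t) = ((-1:ZMod N)^t) * ∑ j ∈ range (t+1), ((-k)^j * (t.choose j : ZMod N)) * Vs k j := by
  have h := congrArg (fun M : Matrix (Fin 2) (Fin 2) (ZMod N) => M 1 0) (pow_two_mul_eq k t)
  simp only [Matrix.smul_apply, Matrix.sum_apply, smul_eq_mul] at h
  rw [genMat_pow_apply10] at h
  rw [h]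
  congr 1
  exact Finset.sum_congr rfl (fun j hj => by rw [genMat_pow_apply10])

lemma W_two_mul (k : ZMod N) (t : ℕ) :
    Ws k (2*t) = ((-1:ZMod N)^t) * ∑ j ∈ range (t+1), ((-k)^j * (t.choose j : ZMod N)) * Ws k j := by
  have h := congrArg (fun M : Matrix (Fin 2) (Fin 2) (ZMod N) => M 1 1) (pow_two_mul_eq k t)
  simp only [Matrix.smul_apply, Matrix.sum_apply, smul_eq_mul] at h
  rw [genMat_pow_apply11] at h
  rw [h]
  congr 1
  exact Finset.sum_congr rfl (fun j hj => by rw [genMat_pow_apply11])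

/- ===== construction lemma ===== -/

lemma pow_as_matrix (k : ZMod N) (i : ℕ) :
    genMat k ^ i = !![Vs k (i+1), -(Vs k i); Vs k i, Ws k i] := by
  ext r c
  fin_cases r <;> fin_cases c <;>
    simp [genMat_pow_apply00, genMat_pow_apply01, genMat_pow_apply10, genMat_pow_apply11]

lemma sandwich_eq (k : ZMod N) (i : ℕ) {e : ZMod N} (he : e * e = 1)
    (hVi : Vs k (i+1) = e) :
    genMat (e * Vs k i) * genMat k ^ i * genMat (e * Vs k i) = (-e) • 1 := by
  have hW : e * Ws k i + Vs k i ^ 2 = 1 := by rw [← hVi]; exact det_identity k i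
  rw [pow_as_matrix, hVi, genMat, Matrix.mul_fin_two, Matrix.mul_fin_two]
  ext r c
  fin_cases r <;> fin_cases c <;>
    simp [Matrix.smul_apply, Matrix.one_apply] <;>
    first
      | linear_combination (Vs k i ^ 2 * (e - 1) + e * Ws k i) * he
      | linear_combination (-Vs k i + e * Ws k i - Ws k i - Vs k i ^ 2) * he + e * hW
      | linear_combination (e * Ws k i + Vs k i - Ws k i - Vs k i ^ 2) * he + e * hW
      | linear_combination (Vs k i ^ 2 * (1 - e) - e * Ws k i) * he
      | linear_combination (e * Vs k i ^ 2 + Ws k i) * he - e * hW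
      | linear_combination (-Vs k i) * he
      | linear_combination (Vs k i) * he
      | ring

lemma sandwich_solution (k : ZMod N) (i : ℕ) {e : ZMod N} (he : e = 1 ∨ e = -1)
    (hVi : Vs k (i+1) = e) :
    IsSolutionE ((e * Vs k i) :: (List.replicate i k ++ [e * Vs k i])) := by
  have he2 : e * e = 1 := by rcases he with h | h <;> rw [h] <;> ring
  have h := sandwich_eq k i he2 hVi
  rw [IsSolutionE, Mword_sandwich, h]
  rcases he with h1 | h1
  · right; rw [h1]; simp
  · left; rw [h1]; simp

lemma reducible_of_V (k : ZMod N) {M i : ℕ}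
    (hM : Vs k M = 0) (hw : Ws k M = 1 ∨ Ws k M = -1)
    (hi1 : 1 ≤ i) (hi3 : i + 3 ≤ M)
    (he : Vs k (i+1) = 1 ∨ Vs k (i+1) = -1) :
    IsReducibleE (List.replicate M k) := by
  set e := Vs k (i+1) with he'
  set w := Ws k M with hw'
  have hww : w * w = 1 := by rcases hw with h | h <;> rw [h] <;> ring
  have hee : e * e = 1 := by rcases he with h | h <;> rw [h] <;> ring
  set j := M - 2 - i with hj
  have hj1 : 1 ≤ j := by omega
  have hδ : Vs k (j+1) = -w * e := by
    have := V_pair k (show (j+1) + (i+1) = M by omega) hM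
    rw [← he', ← hw'] at this; exact this
  have hVj : Vs k j = -w * Vs k (i+2) := by
    have := V_pair k (show j + (i+2) = M by omega) hM
    rw [← hw'] at this; exact this
  have hδpm : Vs k (j+1) = 1 ∨ Vs k (j+1) = -1 := by
    rcases hw with h1 | h1 <;> rcases he with h2 | h2 <;>
      rw [hδ, h1, h2] <;> simp
  set x := e * Vs k i with hx
  set z := Vs k (j+1) * Vs k j with hz
  refine ⟨z :: (List.replicate j k ++ [z]), x :: (List.replicate i k ++ [x]),
    by simp; omega, by simp; omega, ?_, ?_⟩
  · exact sandwich_solution k i he he'.symm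
  · left
    refine ⟨0, ?_⟩
    rw [List.rotate_zero]
    have hsum : z + x = k := by
      rw [hz, hx, hδ, hVj, Vs_rec, ← he']
      linear_combination (k * e * e - e * Vs k i) * hww + k * hee
    have h1 : ∀ (y : ZMod N) (l : List (ZMod N)), (y :: (l ++ [y])).getLastD 0 = y := by
      intro y l
      rw [show (y :: (l ++ [y])) = ((y :: l) ++ [y]) from by simp, List.getLastD_concat]
    have hoplus : oplus (z :: (List.replicate j k ++ [z])) (x :: (List.replicate i k ++ [x]))
        = (z + x) :: (List.replicate j k ++ (z + x) :: List.replicate i k) := by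
      rw [oplus, h1, h1]
      simp [List.dropLast_concat, add_comm]
    rw [hoplus, hsum]
    rw [show M = (j+1) + (i+1) by omega, List.replicate_add]
    simp [List.replicate_succ]

/- ===== unpacking a reduction ===== -/

def hMat {N : ℕ} (z : ZMod N) : Matrix (Fin 2) (Fin 2) (ZMod N) := !![0, 1; -1, z]

lemma hMat_mul (z : ZMod N) : hMat z * genMat z = 1 := by
  rw [hMat, genMat, Matrix.mul_fin_two, one_fin_two]
  norm_num

lemma list_struct (l : List (ZMod N)) (h : 2 ≤ l.length) :
    l = l.headD 0 :: (((l.drop 1).dropLast) ++ [l.getLastD 0]) := by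
  cases l with
  | nil => simp at h
  | cons x t =>
    have ht : t ≠ [] := by
      intro h'; subst h'; simp at h
    have h2 : (x :: t).getLastD 0 = t.getLast ht := by
      conv_lhs => rw [← List.dropLast_append_getLast ht]
      rw [show (x :: (t.dropLast ++ [t.getLast ht])) = ((x :: t.dropLast) ++ [t.getLast ht]) from by simp,
        List.getLastD_concat]
    rw [h2, List.headD_cons, List.drop_one, List.tail_cons]
    congr 1
    exact (List.dropLast_append_getLast ht).symm

lemma exists_V_pm_one_of_reducible (k : ZMod N) {M : ℕ}
    (hred : IsReducibleE (List.replicate M k)) :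
    ∃ i, 1 ≤ i ∧ i + 3 ≤ M ∧ (Vs k (i+1) = 1 ∨ Vs k (i+1) = -1) := by
  obtain ⟨a, b, ha3, hb3, hbsol, hequiv⟩ := hred
  have hopl : oplus a b = List.replicate M k := by
    rcases hequiv with ⟨r, hr⟩ | ⟨r, hr⟩
    · rw [hr, List.rotate_replicate]
    · rw [hr, List.reverse_replicate, List.rotate_replicate]
  have hmem : ∀ x ∈ oplus a b, x = k := by
    rw [hopl]; exact fun x hx => List.eq_of_mem_replicate hx
  have hlen : a.length + b.length - 2 = M := by
    have := congrArg List.length hopl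
    simp only [oplus, List.length_cons, List.length_append, List.length_dropLast,
      List.length_drop, List.length_replicate] at this
    omega
  set i := b.length - 2 with hi
  refine ⟨i, by omega, by omega, ?_⟩
  have hmid : (b.drop 1).dropLast = List.replicate i k := by
    rw [List.eq_replicate_iff]
    constructor
    · simp only [List.length_dropLast, List.length_drop]
      omega
    · intro z hz
      exact hmem z (by rw [oplus]; simp only [List.mem_cons, List.mem_append]; tauto)
  have hb' : b = b.headD 0 :: (List.replicate i k ++ [b.getLastD 0]) := by
    conv_lhs => rw [list_struct b (by omega)]
    rw [hmid]
  rw [hb', IsSolutionE, Mword_sandwich] at hbsol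
  set x := b.headD 0
  set y := b.getLastD 0
  have key : ∀ e : ZMod N, genMat y * genMat k ^ i * genMat x = e • 1 →
      Vs k (i+1) = -e := by
    intro e hE
    have h1 : genMat k ^ i = e • (hMat y * hMat x) := by
      have := congrArg (fun M => hMat y * M * hMat x) hE
      rw [show hMat y * (genMat y * genMat k ^ i * genMat x) * hMat x
          = (hMat y * genMat y) * (genMat k ^ i) * (genMat x * hMat x) from by
        noncomm_ring] at this
      rw [hMat_mul] at this
      have hxh : genMat x * hMat x = 1 := by
        rw [hMat, genMat, Matrix.mul_fin_two, one_fin_two]; norm_num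
      rw [hxh, one_mul, mul_one] at this
      rw [this, mul_smul_comm, smul_mul_assoc, mul_one]
    have := congrArg (fun M : Matrix (Fin 2) (Fin 2) (ZMod N) => M 0 0) h1
    simp only [Matrix.smul_apply, smul_eq_mul] at this
    rw [genMat_pow_apply00] at this
    rw [this, hMat, hMat, Matrix.mul_fin_two]
    norm_num
  rcases hbsol with hE | hE
  · have := key 1 (by rw [hE, one_smul])
    right; exact this.trans (by norm_num)
  · have := key (-1) (by rw [hE]; simp)
    left; exact this.trans (by norm_num)

/- ===== ℕ-arithmetic helpers ===== -/

lemma choose_factorization_le (p : ℕ) {t j : ℕ} (hj1 : 1 ≤ j) (hjt : j ≤ t) :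
    t.factorization p ≤ (t.choose j).factorization p + j.factorization p := by
  obtain ⟨t', rfl⟩ : ∃ t', t = t' + 1 := ⟨t - 1, by omega⟩
  obtain ⟨j', rfl⟩ : ∃ j', j = j' + 1 := ⟨j - 1, by omega⟩
  have hid : (t' + 1) * (t'.choose j') = ((t' + 1).choose (j' + 1)) * (j' + 1) :=
    Nat.add_one_mul_choose_eq t' j'
  have hc1 : t'.choose j' ≠ 0 := (Nat.choose_pos (by omega)).ne'
  have hc2 : (t' + 1).choose (j' + 1) ≠ 0 := (Nat.choose_pos (by omega)).ne'
  have h1 : ((t' + 1) * (t'.choose j')).factorization p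
      = (t' + 1).factorization p + (t'.choose j').factorization p := by
    rw [Nat.factorization_mul (by omega) hc1]; simp
  have h2 : (((t' + 1).choose (j' + 1)) * (j' + 1)).factorization p
      = ((t' + 1).choose (j' + 1)).factorization p + (j' + 1).factorization p := by
    rw [Nat.factorization_mul hc2 (by omega)]; simp
  have := h1.symm.trans (by rw [hid, h2])
  omega

lemma lt_three_pow (j : ℕ) : j + 2 < 3 ^ (j + 1) := by
  induction j with
  | zero => norm_num
  | succ j ih =>
    have : 3 ^ (j + 1 + 1) = 3 * 3 ^ (j + 1) := by ring
    omega

lemma padic_le_sub_two {p j : ℕ} (hp : p.Prime) (hp3 : 3 ≤ p) (hj : 2 ≤ j) :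
    j.factorization p ≤ j - 2 := by
  by_contra h
  push_neg at h
  have hdvd : p ^ (j.factorization p) ∣ j := Nat.ordProj_dvd j p
  have hle : p ^ (j - 1) ≤ j := by
    calc p ^ (j - 1) ≤ p ^ (j.factorization p) := Nat.pow_le_pow_right (by omega) (by omega)
    _ ≤ j := Nat.le_of_dvd (by omega) hdvd
  have h3 : 3 ^ (j - 1) ≤ p ^ (j - 1) := Nat.pow_le_pow_left hp3 _
  have := lt_three_pow (j - 2)
  have hj1 : j - 2 + 1 = j - 1 := by omega
  rw [hj1] at this
  omega

/- ===== arithmetic in ZMod (p^n) ===== -/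

section Arith
variable {p n : ℕ} (hp : p.Prime) (hp2 : p ≠ 2) (hn : 1 ≤ n)
include hp

lemma cast_zero_of_dvd {m : ℕ} (h : p^n ∣ m) : (m : ZMod (p^n)) = 0 :=
  (ZMod.natCast_eq_zero_iff m (p^n)).mpr h

lemma pnil : IsNilpotent (p : ZMod (p^n)) := by
  refine ⟨n, ?_⟩
  rw [← Nat.cast_pow]
  exact cast_zero_of_dvd hp dvd_rfl

include hn in
lemma ppow_ne_zero {a : ℕ} (ha : a < n) : ((p : ZMod (p^n))^a) ≠ 0 := by
  rw [← Nat.cast_pow, Ne, ZMod.natCast_eq_zero_iff]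
  intro h
  have := (Nat.pow_dvd_pow_iff_le_right hp.one_lt).mp h
  omega

include hn in
lemma punit_or_dvd (x : ZMod (p^n)) : IsUnit x ∨ (p : ZMod (p^n)) ∣ x := by
  haveI : NeZero (p^n) := ⟨pow_ne_zero n hp.ne_zero⟩
  by_cases hu : IsUnit x
  · exact Or.inl hu
  · right
    have hx : x = ((x.val : ℕ) : ZMod (p^n)) := (ZMod.natCast_rightInverse x).symm
    have hnc : ¬ Nat.Coprime x.val (p^n) := by
      intro hc
      exact hu (hx ▸ (ZMod.isUnit_iff_coprime x.val (p^n)).mpr hc)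
    have hpd : p ∣ x.val := by
      by_contra hnd
      exact hnc ((Nat.coprime_pow_right_iff (Nat.lt_of_lt_of_le Nat.zero_lt_one hn) x.val p).mpr ((hp.coprime_iff_not_dvd.mpr hnd).symm))
    rcases hpd with ⟨c, hc⟩
    exact ⟨(c : ZMod (p^n)), by rw [hx, hc]; push_cast; ring⟩

include hn in
lemma dichot {u c : ZMod (p^n)} (hu : IsUnit u) (h : c * (c + u) = 0) :
    c = 0 ∨ c + u = 0 := by
  rcases punit_or_dvd hp hn c with hc | ⟨d, hd⟩
  · exact Or.inr ((hc.mul_right_eq_zero).mp h)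
  · left
    have hnil : IsNilpotent (c : ZMod (p^n)) := by
      refine ⟨n, ?_⟩
      rw [hd, mul_pow, ← Nat.cast_pow, ZMod.natCast_self, zero_mul]
    have hcu : IsUnit (c + u) := by
      rw [add_comm]
      exact IsNilpotent.isUnit_add_left_of_commute hnil hu (Commute.all _ _)
    exact by
      have := h
      rw [mul_comm] at this
      exact (hcu.mul_right_eq_zero).mp this

include hp2 hn in
lemma two_unit : IsUnit (2 : ZMod (p^n)) := by
  have h2 : ((2 : ℕ) : ZMod (p^n)) = (2 : ZMod (p^n)) := by norm_num
  rw [← h2]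
  rw [ZMod.isUnit_iff_coprime]
  exact Nat.Coprime.pow_right _ ((Nat.coprime_primes Nat.prime_two hp).mpr (Ne.symm hp2))

include hp2 hn in
lemma sq_eq_one {x : ZMod (p^n)} (h : x^2 = 1) : x = 1 ∨ x = -1 := by
  have h0 : (x - 1) * ((x - 1) + 2) = 0 := by linear_combination h
  rcases dichot hp hn (two_unit hp hp2 hn) h0 with h1 | h1
  · left; linear_combination h1
  · right; linear_combination h1

include hn in
lemma pmul_unit_ne_zero {a : ℕ} (ha : a < n) {y : ZMod (p^n)} (hy : IsUnit y) :
    ((p : ZMod (p^n))^a) * y ≠ 0 := by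
  intro h
  exact ppow_ne_zero hp hn ha (hy.mul_left_eq_zero.mp h)

end Arith

/- ===== key number-theoretic facts ===== -/

section Main
variable {p n : ℕ} (hp : p.Prime) (hp2 : p ≠ 2) (hn : 1 ≤ n)
variable {s : ℕ} {K u : ZMod (p^n)} (hu : IsUnit u)
  (hs1 : 1 ≤ s) (hsn : s < n) (hK : K = (p : ZMod (p^n))^s * u)

include hp hp2 hs1 hsn hK in
lemma B1 : Vs K (2 * p^(n-s)) = 0 := by
  rw [V_two_mul, Finset.sum_eq_zero, mul_zero]
  intro j hj
  rw [Finset.mem_range] at hj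
  rcases Nat.eq_zero_or_pos j with rfl | hj1
  · rw [Vs_zero, mul_zero]
  · have hfP : (p^(n-s)).factorization p = n - s := by
      rw [hp.factorization_pow]; simp
    have hle := choose_factorization_le p hj1 (by omega : j ≤ p^(n-s))
    rw [hfP] at hle
    have hjs : j.factorization p + s ≤ j * s := by
      rcases Nat.lt_or_ge j 2 with h2 | h2
      · have : j = 1 := by omega
        subst this
        simp [Nat.factorization_one]
      · obtain ⟨j', rfl⟩ : ∃ j', j = j' + 2 := ⟨j - 2, by omega⟩
        have hp3 : 3 ≤ p := by have := hp.two_le; omega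
        have hv := padic_le_sub_two hp hp3 h2
        have hj's : j' ≤ j' * s := Nat.le_mul_of_pos_right j' (by omega)
        have hexp : (j' + 2) * s = j' * s + s + s := by ring
        omega
    set C := (p^(n-s)).choose j with hC
    have hCne : C ≠ 0 := (Nat.choose_pos (by omega)).ne'
    have hdvd : p ^ n ∣ p ^ (s * j) * C := by
      rw [hp.pow_dvd_iff_le_factorization (Nat.mul_ne_zero (pow_ne_zero _ hp.pos.ne') hCne)]
      rw [Nat.factorization_mul (pow_ne_zero _ hp.pos.ne') hCne]
      simp only [Finsupp.add_apply, hp.factorization_pow, Finsupp.single_eq_same]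
      have : s * j = j * s := by ring
      omega
    have h0 : ((p : ZMod (p^n))^(s * j)) * (C : ZMod (p^n)) = 0 := by
      rw [← Nat.cast_pow, ← Nat.cast_mul]
      exact cast_zero_of_dvd hp hdvd
    have hKj : (-K)^j = ((-1 : ZMod (p^n))^j * u^j) * ((p : ZMod (p^n))^(s * j)) := by
      rw [hK]
      rw [show -((p : ZMod (p^n))^s * u) = (-1) * ((p : ZMod (p^n))^s * u) by ring]
      rw [mul_pow, mul_pow, ← pow_mul]
      ring
    rw [hKj]
    calc ((-1 : ZMod (p^n))^j * u^j * ((p:ZMod (p^n))^(s*j)) * (C : ZMod (p^n))) * Vs K j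
        = ((-1 : ZMod (p^n))^j * u^j * Vs K j) * (((p:ZMod (p^n))^(s*j)) * (C : ZMod (p^n))) := by ring
    _ = 0 := by rw [h0, mul_zero]

include hp hp2 hn hu hs1 hsn hK in
lemma B2even {t : ℕ} (ht1 : 1 ≤ t) (ht2 : t < p^(n-s)) : Vs K (2 * t) ≠ 0 := by
  have hp3 : 3 ≤ p := by have := hp.two_le; omega
  set v := t.factorization p with hv
  set t' := t / p ^ v with ht'
  have htfac : p ^ v * t' = t := Nat.ordProj_mul_ordCompl_eq_self t p
  have ht'p : ¬ p ∣ t' := Nat.not_dvd_ordCompl hp (by omega)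
  have hvn : v < n - s := by
    have h1 : p ^ v ≤ t := Nat.le_of_dvd (by omega) (Nat.ordProj_dvd t p)
    have : p ^ v < p ^ (n - s) := lt_of_le_of_lt h1 ht2
    exact (Nat.pow_lt_pow_iff_right hp.one_lt).mp this
  set a := s + v with ha
  have ht'u : IsUnit ((t' : ℕ) : ZMod (p^n)) := by
    rw [ZMod.isUnit_iff_coprime]
    exact Nat.Coprime.pow_right _ ((hp.coprime_iff_not_dvd.mpr ht'p).symm)
  set f : ℕ → ZMod (p^n) := fun j => ((-K)^j * ((t.choose j : ℕ) : ZMod (p^n))) * Vs K j with hf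
  have hsplit : ∑ j ∈ range (t+1), f j = f 0 + f 1 + ∑ j ∈ Ico 2 (t+1), f j := by
    rw [← Finset.sum_range_add_sum_Ico f (by omega : 2 ≤ t+1)]
    simp [Finset.sum_range_succ]
  have hf0 : f 0 = 0 := by simp [hf, Vs_zero]
  have hf1 : f 1 = -(((p:ZMod (p^n))^a) * (u * (t' : ZMod (p^n)))) := by
    simp only [hf, pow_one, Nat.choose_one_right, Vs_one, mul_one]
    rw [hK, ← htfac]
    push_cast
    rw [ha, pow_add]
    ring
  have hdvd : ((p:ZMod (p^n))^(a+1)) ∣ ∑ j ∈ Ico 2 (t+1), f j := by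
    apply Finset.dvd_sum
    intro j hj
    rw [Finset.mem_Ico] at hj
    obtain ⟨hj2, hjt⟩ := hj
    have hCne : t.choose j ≠ 0 := (Nat.choose_pos (by omega)).ne'
    have hle := choose_factorization_le p (by omega) (by omega : j ≤ t)
    have hvj := padic_le_sub_two hp hp3 hj2
    have hjs : j.factorization p + s + 1 ≤ j * s := by
      obtain ⟨j', rfl⟩ : ∃ j', j = j' + 2 := ⟨j - 2, by omega⟩
      have hj's : j' ≤ j' * s := Nat.le_mul_of_pos_right j' (by omega)
      have hexp : (j' + 2) * s = j' * s + s + s := by ring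
      omega
    have hdvdN : p ^ (a+1) ∣ p ^ (s*j) * t.choose j := by
      rw [hp.pow_dvd_iff_le_factorization (Nat.mul_ne_zero (pow_ne_zero _ hp.pos.ne') hCne)]
      rw [Nat.factorization_mul (pow_ne_zero _ hp.pos.ne') hCne]
      simp only [Finsupp.add_apply, hp.factorization_pow, Finsupp.single_eq_same]
      have : s * j = j * s := by ring
      omega
    have hcast : ((p:ZMod (p^n))^(a+1)) ∣ (((p ^ (s*j) * t.choose j : ℕ)) : ZMod (p^n)) := by
      have h := (Nat.cast_dvd_cast hdvdN : ((p^(a+1) : ℕ) : ZMod (p^n)) ∣ ((p ^ (s*j) * t.choose j : ℕ) : ZMod (p^n)))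
      rwa [Nat.cast_pow] at h
    have hKj : (-K)^j = ((-1 : ZMod (p^n))^j * u^j) * ((p : ZMod (p^n))^(s * j)) := by
      rw [hK, show -((p : ZMod (p^n))^s * u) = (-1) * ((p : ZMod (p^n))^s * u) by ring,
        mul_pow, mul_pow, ← pow_mul]
      ring
    rw [hf]
    simp only
    rw [hKj]
    rw [show ((-1 : ZMod (p^n))^j * u^j * ((p:ZMod (p^n))^(s*j))) * ((t.choose j : ℕ) : ZMod (p^n)) * Vs K j
        = ((-1 : ZMod (p^n))^j * u^j * Vs K j) * (((p:ZMod (p^n))^(s*j)) * ((t.choose j : ℕ) : ZMod (p^n))) by ring]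
    apply Dvd.dvd.mul_left
    have heq : ((p:ZMod (p^n))^(s*j)) * ((t.choose j : ℕ) : ZMod (p^n))
        = ((p ^ (s*j) * t.choose j : ℕ) : ZMod (p^n)) := by push_cast; ring
    rw [heq]
    exact hcast
  obtain ⟨Z, hZ⟩ := hdvd
  intro hcontra
  rw [V_two_mul, hsplit, hf0, hf1, hZ] at hcontra
  have hX : (((-1 : ZMod (p^n))^t)) * (((p:ZMod (p^n))^a) * (-(u * (t':ZMod (p^n))) + (p:ZMod (p^n)) * Z)) = 0 := by
    rw [← hcontra, pow_succ]
    ring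
  have hunit1 : IsUnit ((-1 : ZMod (p^n))^t) := (isUnit_one.neg).pow t
  have h2 : ((p:ZMod (p^n))^a) * (-(u * (t':ZMod (p^n))) + (p:ZMod (p^n)) * Z) = 0 :=
    (hunit1.mul_right_eq_zero).mp hX
  have hyunit : IsUnit (-(u * (t':ZMod (p^n))) + (p:ZMod (p^n)) * Z) := by
    refine IsNilpotent.isUnit_add_left_of_commute ?_ ((hu.mul ht'u).neg) (Commute.all _ _)
    exact (Commute.all _ _).isNilpotent_mul_right (pnil hp)
  exact pmul_unit_ne_zero hp hn (by omega : a < n) hyunit h2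

include hp hn hs1 hK in
lemma B2odd (r : ℕ) : Vs K (2*r+1) ≠ 0 := by
  intro h
  haveI := Fact.mk hp.one_lt
  have hdvd : p ∣ p^n := dvd_pow_self p (by omega)
  set C := ZMod.castHom hdvd (ZMod p) with hC
  have hCK : C K = 0 := by
    rw [hK, _root_.map_mul, map_pow, map_natCast, ZMod.natCast_self, zero_pow (by omega), zero_mul]
  have h2 : (0 : ZMod p) = (-1)^r := by
    calc (0 : ZMod p) = C (Vs K (2*r+1)) := by rw [h, map_zero]
    _ = Vs (C K) (2*r+1) := Vs_hom C K _
    _ = (-1)^r := by rw [hCK, Vs_zero_param]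
  rcases Nat.even_or_odd r with hpar | hpar
  · rw [hpar.neg_one_pow] at h2
    exact one_ne_zero h2.symm
  · rw [hpar.neg_one_pow] at h2
    have : (1 : ZMod p) = 0 := by linear_combination h2
    exact one_ne_zero this

include hp hp2 hn hu hs1 hsn hK in
lemma B3 : ∃ i, 1 ≤ i ∧ i + 3 ≤ 2 * p^(n-s) ∧ (Vs K (i+1) = 1 ∨ Vs K (i+1) = -1) := by
  have hp3 : 3 ≤ p := by have := hp.two_le; omega
  have hP3 : 3 ≤ p^(n-s) := le_trans hp3 (Nat.le_self_pow (by omega) p)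
  rcases Nat.lt_or_ge n (2*s+1) with hc | hc
  · refine ⟨2, by omega, by omega, Or.inr ?_⟩
    have h2 : Vs K 2 = K := by
      have := Vs_rec K 0
      rw [Vs_one, Vs_zero] at this
      rw [this]; ring
    have h3 : Vs K 3 = K * K - 1 := by
      have := Vs_rec K 1
      rw [Vs_one, h2] at this
      exact this
    have hKK : K * K = 0 := by
      rw [hK, show ((p:ZMod (p^n))^s * u) * ((p:ZMod (p^n))^s * u)
        = ((p:ZMod (p^n))^(2*s)) * (u * u) by ring]
      rw [← Nat.cast_pow, cast_zero_of_dvd hp (pow_dvd_pow p (by omega)), zero_mul]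
    rw [h3, hKK]; ring
  · set t := p^(n-2*s) with htdef
    have ht2 : 2 ≤ t := le_trans (by omega) (Nat.le_self_pow (by omega) p)
    have htP : t < p^(n-s) := Nat.pow_lt_pow_right hp.one_lt (by omega)
    have hSW : ∑ j ∈ range (t+1), ((-K)^j * ((t.choose j : ℕ) : ZMod (p^n))) * Ws K j = 1 := by
      set f : ℕ → ZMod (p^n) := fun j => ((-K)^j * ((t.choose j : ℕ) : ZMod (p^n))) * Ws K j with hf
      have hsplit : ∑ j ∈ range (t+1), f j = f 0 + ∑ j ∈ Ico 1 (t+1), f j := by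
        rw [← Finset.sum_range_add_sum_Ico f (by omega : 1 ≤ t+1)]
        simp [Finset.sum_range_succ]
      have hf0 : f 0 = 1 := by simp [hf, Ws_zero]
      have hrest : ∑ j ∈ Ico 1 (t+1), f j = 0 := by
        apply Finset.sum_eq_zero
        intro j hj
        rw [Finset.mem_Ico] at hj
        obtain ⟨hj1, hjt⟩ := hj
        rcases Nat.lt_or_ge j 2 with h2 | h2
        · have : j = 1 := by omega
          subst this
          simp [hf, Ws_one]
        · have hCne : t.choose j ≠ 0 := (Nat.choose_pos (by omega)).ne'
          have hle := choose_factorization_le p (by omega) (by omega : j ≤ t)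
          have hfacT : t.factorization p = n - 2*s := by
            rw [htdef, hp.factorization_pow]; simp
          have hvj := padic_le_sub_two hp hp3 h2
          have hjs : j.factorization p + 2*s ≤ j * s := by
            obtain ⟨j', rfl⟩ : ∃ j', j = j' + 2 := ⟨j - 2, by omega⟩
            have hj's : j' ≤ j' * s := Nat.le_mul_of_pos_right j' (by omega)
            have hexp : (j' + 2) * s = j' * s + s + s := by ring
            omega
          have hdvdN : p ^ n ∣ p ^ (s*j) * t.choose j := by
            rw [hp.pow_dvd_iff_le_factorization (Nat.mul_ne_zero (pow_ne_zero _ hp.pos.ne') hCne)]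
            rw [Nat.factorization_mul (pow_ne_zero _ hp.pos.ne') hCne]
            simp only [Finsupp.add_apply, hp.factorization_pow, Finsupp.single_eq_same]
            have : s * j = j * s := by ring
            omega
          have h0 : ((p : ZMod (p^n))^(s * j)) * ((t.choose j : ℕ) : ZMod (p^n)) = 0 := by
            rw [← Nat.cast_pow, ← Nat.cast_mul]
            exact cast_zero_of_dvd hp hdvdN
          have hKj : (-K)^j = ((-1 : ZMod (p^n))^j * u^j) * ((p : ZMod (p^n))^(s * j)) := by
            rw [hK, show -((p : ZMod (p^n))^s * u) = (-1) * ((p : ZMod (p^n))^s * u) by ring,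
              mul_pow, mul_pow, ← pow_mul]
            ring
          rw [hf]
          simp only
          rw [hKj]
          calc ((-1 : ZMod (p^n))^j * u^j * ((p:ZMod (p^n))^(s*j))) * ((t.choose j : ℕ) : ZMod (p^n)) * Ws K j
              = ((-1 : ZMod (p^n))^j * u^j * Ws K j) * (((p:ZMod (p^n))^(s*j)) * ((t.choose j : ℕ) : ZMod (p^n))) := by ring
          _ = 0 := by rw [h0, mul_zero]
      rw [hsplit, hf0, hrest, add_zero]
    have hW2t : Ws K (2*t) = (-1)^t := by rw [W_two_mul, hSW, mul_one]
    have hV2t1 : Vs K (2*t-1) = -(-1 : ZMod (p^n))^t := by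
      have := Ws_eq_neg_Vs K (2*t-1)
      rw [show 2*t - 1 + 1 = 2*t by omega, hW2t] at this
      linear_combination this
    have hB1' : Vs K (2 * p^(n-s)) = 0 := B1 hp hp2 hs1 hsn hK
    set i := 2*(p^(n-s) - t) with hi
    refine ⟨i, by omega, by omega, ?_⟩
    have hpair := V_pair K (show (i+1) + (2*t-1) = 2*p^(n-s) by omega) hB1'
    have hval : Vs K (i+1) = Ws K (2*p^(n-s)) * (-1)^t := by
      rw [hpair, hV2t1]; ring
    rcases sq_eq_one hp hp2 hn (Ws_sq hB1') with hw | hw <;>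
      rcases Nat.even_or_odd t with hpar | hpar <;>
        rw [hval, hw, hpar.neg_one_pow] <;> norm_num

/- ===== solution characterization and monomial size ===== -/

include hp hp2 hn in
lemma solution_iff (k : ZMod (p^n)) (m : ℕ) :
    IsSolutionE (List.replicate m k) ↔ Vs k m = 0 := by
  constructor
  · exact V_eq_zero_of_solution
  · intro h
    obtain ⟨h1, h2⟩ := ws_sq_of_V_zero h
    rw [isSolution_replicate_iff']
    rcases sq_eq_one hp hp2 hn h2 with hw | hw
    · left; rw [h1, hw, one_smul]
    · right; rw [h1, hw]; simp

include hp hp2 hn in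
lemma monoSize_eq_of (k : ZMod (p^n)) {M : ℕ} (hM : 0 < M) (h0 : Vs k M = 0)
    (hmin : ∀ m, 0 < m → m < M → Vs k m ≠ 0) : monomialSize (p^n) k = M := by
  haveI : NeZero (p^n) := ⟨pow_ne_zero n hp.ne_zero⟩
  apply le_antisymm
  · exact monoSize_le k hM ((solution_iff hp hp2 hn k M).mpr h0)
  · by_contra h
    push_neg at h
    obtain ⟨hpos, hsol⟩ := monoSize_mem k (N := p^n)
    exact hmin _ hpos h (V_eq_zero_of_solution hsol)

include hp hp2 hn in
lemma irreducible_of_unit {K : ZMod (p^n)} (hKu : IsUnit K) :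
    IsIrreducibleE (monoSol (p^n) K) := by
  haveI : NeZero (p^n) := ⟨pow_ne_zero n hp.ne_zero⟩
  haveI : Fact (1 < p^n) := Fact.mk (Nat.one_lt_pow (by omega) hp.one_lt)
  set M := monomialSize (p^n) K with hMdef
  obtain ⟨hMpos, hMsol⟩ := monoSize_mem K (N := p^n)
  have hV0 : Vs K M = 0 := V_eq_zero_of_solution hMsol
  have hM1 : M ≠ 1 := by
    intro h
    rw [h, Vs_one] at hV0
    exact one_ne_zero hV0
  have hM2 : M ≠ 2 := by
    intro h
    have h2 : Vs K 2 = K := by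
      have := Vs_rec K 0
      rw [Vs_one, Vs_zero] at this
      rw [this]; ring
    rw [h, h2] at hV0
    exact hKu.ne_zero hV0
  have hM3 : 3 ≤ M := by omega
  refine ⟨hMsol, by rw [monoSol, List.length_replicate]; exact hM3, ?_⟩
  intro hred
  rw [monoSol] at hred
  obtain ⟨i, hi1, hi3, hV⟩ := exists_V_pm_one_of_reducible K hred
  set e := Vs K (i+1) with he'
  have hee : e * e = 1 := by rcases hV with h | h <;> rw [h] <;> ring
  set c := Ws K (i+1) with hc'
  have hVi2 : Vs K (i+2) = c + e * K := by
    rw [Vs_rec, ← he', hc', Ws_eq_neg_Vs]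
    ring
  have hdet := det_identity K (i+1)
  rw [hVi2, ← he', ← hc'] at hdet
  have hquad : c * (c + e * K) = 0 := by linear_combination hdet - hee
  have heu : IsUnit e := by
    rcases hV with h | h <;> rw [h]
    · exact isUnit_one
    · exact isUnit_one.neg
  rcases dichot hp hn (heu.mul hKu) hquad with hc0 | hcK
  · have hVi : Vs K i = 0 := by
      have h' := (Ws_eq_neg_Vs K i).symm.trans hc0
      linear_combination -h'
    have : M ≤ i := monoSize_le K (by omega) ((solution_iff hp hp2 hn K i).mpr hVi)
    omega
  · have hVi2' : Vs K (i+2) = 0 := by rw [hVi2]; exact hcK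
    have : M ≤ i + 2 := monoSize_le K (by omega) ((solution_iff hp hp2 hn K (i+2)).mpr hVi2')
    omega

include hp hp2 hn in
lemma not_irreducible_of_pdvd (k : ℤ) (hdvd : (p : ℤ) ∣ k) :
    ¬ IsIrreducibleE (monoSol (p^n) ((k : ℤ) : ZMod (p^n))) := by
  haveI : NeZero (p^n) := ⟨pow_ne_zero n hp.ne_zero⟩
  haveI : Fact (1 < p^n) := Fact.mk (Nat.one_lt_pow (by omega) hp.one_lt)
  set K := ((k : ℤ) : ZMod (p^n)) with hKdef
  have h2K : Vs K 2 = K := by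
    have := Vs_rec K 0
    rw [Vs_one, Vs_zero] at this
    rw [this]; ring
  by_cases hK0 : K = 0
  · have hsize : monomialSize (p^n) K = 2 := by
      apply monoSize_eq_of hp hp2 hn K (by omega)
      · rw [h2K]; exact hK0
      · intro m hm1 hm2
        have : m = 1 := by omega
        rw [this, Vs_one]
        exact one_ne_zero
    rintro ⟨_, hlen, _⟩
    rw [monoSol, List.length_replicate, hsize] at hlen
    omega
  · -- K = p^s * u with u a unit, 1 ≤ s < n
    have hκK : ((K.val : ℕ) : ZMod (p^n)) = K := ZMod.natCast_rightInverse K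
    have hκ0 : K.val ≠ 0 := by
      intro h
      apply hK0
      rw [← hκK, h, Nat.cast_zero]
    have hκint : ((K.val : ℤ) : ZMod (p^n)) = K := by
      rw [Int.cast_natCast, hκK]
    have hκp : p ∣ K.val := by
      have h0 : (((k - (K.val : ℤ)) : ℤ) : ZMod (p^n)) = 0 := by
        push_cast
        rw [hκK, ← hKdef]
        ring
      have hdd : ((p^n : ℕ) : ℤ) ∣ k - (K.val : ℤ) :=
        (ZMod.intCast_zmod_eq_zero_iff_dvd _ _).mp h0
      have hp1 : (p : ℤ) ∣ k - (K.val : ℤ) := by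
        refine dvd_trans ?_ hdd
        push_cast
        exact dvd_pow_self _ (by omega)
      have : (p : ℤ) ∣ (K.val : ℤ) := by
        have := dvd_sub hdvd hp1
        rw [show k - (k - (K.val : ℤ)) = (K.val : ℤ) by ring] at this
        exact this
      exact_mod_cast this
    set s := K.val.factorization p with hs
    have hs1 : 1 ≤ s := hp.factorization_pos_of_dvd hκ0 hκp
    have hκlt : K.val < p^n := ZMod.val_lt K
    have hsn : s < n := by
      have h1 : p ^ s ≤ K.val := Nat.le_of_dvd (by omega) (Nat.ordProj_dvd K.val p)
      have : p ^ s < p ^ n := lt_of_le_of_lt h1 hκlt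
      exact (Nat.pow_lt_pow_iff_right hp.one_lt).mp this
    set t' := K.val / p ^ s with ht'
    have htfac : p ^ s * t' = K.val := Nat.ordProj_mul_ordCompl_eq_self K.val p
    have ht'p : ¬ p ∣ t' := Nat.not_dvd_ordCompl hp hκ0
    set u := ((t' : ℕ) : ZMod (p^n)) with hudef
    have hu : IsUnit u := by
      rw [hudef, ZMod.isUnit_iff_coprime]
      exact Nat.Coprime.pow_right _ ((hp.coprime_iff_not_dvd.mpr ht'p).symm)
    have hK : K = (p : ZMod (p^n))^s * u := by
      rw [← hκK, ← htfac]
      push_cast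
      ring
    have hB1' : Vs K (2 * p^(n-s)) = 0 := B1 hp hp2 hs1 hsn hK
    have hsize : monomialSize (p^n) K = 2 * p^(n-s) := by
      apply monoSize_eq_of hp hp2 hn K (Nat.mul_pos (by omega) (pow_pos hp.pos _)) hB1'
      intro m hm1 hm2
      rcases Nat.even_or_odd m with ⟨t, ht⟩ | ⟨r, hr⟩
      · have hmt : m = 2 * t := by omega
        rw [hmt]
        exact B2even hp hp2 hn hu hs1 hsn hK (by omega) (by omega)
      · rw [hr]
        exact B2odd hp hn hs1 hK r
    obtain ⟨i, hi1, hi3, hV⟩ := B3 hp hp2 hn hu hs1 hsn hK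
    rintro ⟨_, _, hnotred⟩
    apply hnotred
    rw [monoSol, hsize]
    exact reducible_of_V K hB1' (sq_eq_one hp hp2 hn (Ws_sq hB1')) hi1 hi3 hV

include hp hn in
lemma isUnit_of_not_dvd {k : ℤ} (hnd : ¬ (p : ℤ) ∣ k) : IsUnit ((k : ℤ) : ZMod (p^n)) := by
  haveI : NeZero (p^n) := ⟨pow_ne_zero n hp.ne_zero⟩
  rcases punit_or_dvd hp hn ((k : ℤ) : ZMod (p^n)) with h | ⟨d, hd⟩
  · exact h
  · exfalso
    apply hnd
    set K := ((k : ℤ) : ZMod (p^n)) with hKdef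
    have hκK : ((K.val : ℕ) : ZMod (p^n)) = K := ZMod.natCast_rightInverse K
    have hκint : ((K.val : ℤ) : ZMod (p^n)) = K := by rw [Int.cast_natCast, hκK]
    -- p ∣ K.val
    have hpv : p ∣ ((p : ZMod (p^n)) * d).val := by
      rw [ZMod.val_mul]
      apply (Nat.dvd_mod_iff (dvd_pow_self p (by omega))).mpr
      apply Dvd.dvd.mul_right
      rw [ZMod.val_natCast]
      exact (Nat.dvd_mod_iff (dvd_pow_self p (by omega))).mpr dvd_rfl
    have hκp : p ∣ K.val := by rw [hd]; exact hpv
    -- transfer to ℤ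
    have h0 : (((k - (K.val : ℤ)) : ℤ) : ZMod (p^n)) = 0 := by
      push_cast
      rw [hκK, ← hKdef]
      ring
    have hdd : ((p^n : ℕ) : ℤ) ∣ k - (K.val : ℤ) :=
      (ZMod.intCast_zmod_eq_zero_iff_dvd _ _).mp h0
    have hp1 : (p : ℤ) ∣ k - (K.val : ℤ) := by
      refine dvd_trans ?_ hdd
      push_cast
      exact dvd_pow_self _ (by omega)
    have hp2' : (p : ℤ) ∣ (K.val : ℤ) := by exact_mod_cast hκp
    have := dvd_add hp1 hp2'
    rwa [show k - (K.val : ℤ) + (K.val : ℤ) = k by ring] at this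

end Main

end Stmt10

/-- for `p` an odd prime, `n ≥ 1` and `N = p^n`, the `(k mod N)`-monomial
minimal solution of `(E_N)` is irreducible iff `p ∤ k`; consequently the number of
`k ∈ ZMod N` with irreducible `k`-monomial minimal solution is `φ(p^n) = p^(n-1)(p-1)`. -/
theorem stmt_10 (p : ℕ) (hp : p.Prime) (hodd : Odd p) (n : ℕ) (hn : 1 ≤ n) :
    (∀ k : ℤ, IsIrreducibleE (monoSol (p ^ n) (k : ZMod (p ^ n))) ↔ ¬ ((p : ℤ) ∣ k)) ∧
    Nat.card {j : ZMod (p ^ n) // IsIrreducibleE (monoSol (p ^ n) j)} =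
      p ^ (n - 1) * (p - 1) ∧
    Nat.totient (p ^ n) = p ^ (n - 1) * (p - 1) := by
  classical
  have hp2 : p ≠ 2 := by
    rintro rfl
    rw [Nat.odd_iff] at hodd
    omega
  have main : ∀ k : ℤ, IsIrreducibleE (monoSol (p ^ n) (k : ZMod (p ^ n))) ↔ ¬ ((p : ℤ) ∣ k) := by
    intro k
    constructor
    · intro hirr
      intro hdvd
      exact Stmt10.not_irreducible_of_pdvd hp hp2 hn k hdvd hirr
    · intro hnd
      exact Stmt10.irreducible_of_unit hp hp2 hn (Stmt10.isUnit_of_not_dvd hp hn hnd)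
  haveI : NeZero (p^n) := ⟨pow_ne_zero n hp.ne_zero⟩
  refine ⟨main, ?_, Nat.totient_prime_pow hp (by omega)⟩
  have hiff : ∀ j : ZMod (p^n), IsIrreducibleE (monoSol (p^n) j) ↔ IsUnit j := by
    intro j
    have hj : (((j.val : ℕ) : ℤ) : ZMod (p^n)) = j := by
      rw [Int.cast_natCast]
      exact ZMod.natCast_rightInverse j
    constructor
    · intro h
      have h1 := (main (j.val : ℤ)).mp (by rw [hj]; exact h)
      have h2 : ¬ p ∣ j.val := by
        intro hc
        exact h1 (by exact_mod_cast hc)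
      have h3 : Nat.Coprime j.val (p^n) :=
        Nat.Coprime.pow_right _ ((hp.coprime_iff_not_dvd.mpr h2).symm)
      have := (ZMod.isUnit_iff_coprime j.val (p^n)).mpr h3
      rwa [ZMod.natCast_rightInverse j] at this
    · intro h
      have h3 : Nat.Coprime j.val (p^n) := by
        have := (ZMod.isUnit_iff_coprime j.val (p^n)).mp
          (by rw [ZMod.natCast_rightInverse j]; exact h)
        exact this
      have h2 : ¬ p ∣ j.val := by
        intro hc
        have hpg : p ∣ Nat.gcd j.val (p^n) := Nat.dvd_gcd hc (dvd_pow_self p (by omega))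
        rw [Nat.Coprime] at h3
        rw [h3] at hpg
        have h4 := Nat.le_of_dvd one_pos hpg
        have := hp.two_le
        omega
      have := (main (j.val : ℤ)).mpr (by intro hc; exact h2 (by exact_mod_cast hc))
      rwa [hj] at this
  have e1 : {j : ZMod (p ^ n) // IsIrreducibleE (monoSol (p ^ n) j)} ≃
      {j : ZMod (p ^ n) // IsUnit j} := Equiv.subtypeEquivRight hiff
  have e2 : (ZMod (p^n))ˣ ≃ {j : ZMod (p ^ n) // IsUnit j} :=
    { toFun := fun u => ⟨(u : ZMod (p^n)), u.isUnit⟩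
      invFun := fun x => x.2.unit
      left_inv := fun u => Units.ext (IsUnit.unit_spec u.isUnit)
      right_inv := fun x => Subtype.ext (IsUnit.unit_spec x.2) }
  calc Nat.card {j : ZMod (p ^ n) // IsIrreducibleE (monoSol (p ^ n) j)}
      = Nat.card {j : ZMod (p ^ n) // IsUnit j} := Nat.card_congr e1
  _ = Nat.card (ZMod (p^n))ˣ := (Nat.card_congr e2).symm
  _ = Nat.totient (p^n) := by
      rw [Nat.card_eq_fintype_card, ZMod.card_units_eq_totient]
  _ = p ^ (n - 1) * (p - 1) := Nat.totient_prime_pow hp (by omega)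
end
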